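/- arXiv:1409.5397 — 8 statements merged into one kernel-verified Lean document; each statement's English description precedes it below -/
import Mathlib

section
/- Let D be a set, μ a positive measure on D, p ∈ (0,∞), and f a bounded measurable function on D with ‖f‖_{L^∞(D,μ)} ≤ M·‖f‖_{L^p(D,μ)}. Then for every q with 0 < q ≤ p and every r ≥ q, one has ‖f‖_{L^r(D,μ)} ≤ M^{(1/q − 1/r)p}·‖f‖_{L^q(D,μ)}. -/
open MeasureTheory ENNReal

/-- Interpolation: `‖f‖_r ≤ ‖f‖_∞^{1-q/r} ‖f‖_q^{q/r}` for `0 < q ≤ r`. -/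
lemma interp_aux {α : Type*} [MeasurableSpace α] (μ : Measure α) (f : α → ℝ)
    (hf : Measurable f) {q r : ℝ} (hq : 0 < q) (hqr : q ≤ r) :
    eLpNorm f (ENNReal.ofReal r) μ
      ≤ (eLpNorm f ∞ μ) ^ (1 - q / r) * (eLpNorm f (ENNReal.ofReal q) μ) ^ (q / r) := by
  have hr : 0 < r := hq.trans_le hqr
  have hrne : ENNReal.ofReal r ≠ 0 := (ENNReal.ofReal_pos.mpr hr).ne'
  have hqne : ENNReal.ofReal q ≠ 0 := (ENNReal.ofReal_pos.mpr hq).ne'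
  rw [eLpNorm_eq_lintegral_rpow_enorm_toReal hrne ENNReal.ofReal_ne_top,
    eLpNorm_eq_lintegral_rpow_enorm_toReal hqne ENNReal.ofReal_ne_top, eLpNorm_exponent_top,
    ENNReal.toReal_ofReal hr.le, ENNReal.toReal_ofReal hq.le]
  set A := eLpNormEssSup f μ with hA
  have key : ∫⁻ x, (‖f x‖₊ : ℝ≥0∞) ^ r ∂μ ≤ A ^ (r - q) * ∫⁻ x, (‖f x‖₊ : ℝ≥0∞) ^ q ∂μ := by
    rw [← lintegral_const_mul _ (by fun_prop)]
    refine lintegral_mono_ae ?_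
    filter_upwards [ae_le_eLpNormEssSup (f := f) (μ := μ)] with x hx
    calc (‖f x‖₊ : ℝ≥0∞) ^ r = (‖f x‖₊ : ℝ≥0∞) ^ (r - q) * (‖f x‖₊ : ℝ≥0∞) ^ q := by
          rw [← ENNReal.rpow_add_of_nonneg _ _ (by linarith) hq.le, sub_add_cancel]
      _ ≤ A ^ (r - q) * (‖f x‖₊ : ℝ≥0∞) ^ q :=
          mul_le_mul_left (ENNReal.rpow_le_rpow hx (by linarith)) _
  calc (∫⁻ x, (‖f x‖₊ : ℝ≥0∞) ^ r ∂μ) ^ (1 / r)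
      ≤ (A ^ (r - q) * ∫⁻ x, (‖f x‖₊ : ℝ≥0∞) ^ q ∂μ) ^ (1 / r) :=
        ENNReal.rpow_le_rpow key (by positivity)
    _ = A ^ (1 - q / r) * ((∫⁻ x, (‖f x‖₊ : ℝ≥0∞) ^ q ∂μ) ^ (1 / q)) ^ (q / r) := by
        rw [ENNReal.mul_rpow_of_nonneg _ _ (by positivity), ← ENNReal.rpow_mul,
          ← ENNReal.rpow_mul]
        congr 2 <;> field_simp

/-- If `‖f‖_{L^∞(μ)} ≤ M ‖f‖_{L^p(μ)}` for some `0 < p < ∞` and a bounded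
measurable `f`, then for every `0 < q ≤ p` and every `r ≥ q`,
`‖f‖_{L^r(μ)} ≤ M^{(1/q - 1/r)p} ‖f‖_{L^q(μ)}`. -/
theorem stmt1 {α : Type*} [MeasurableSpace α] (μ : Measure α) (f : α → ℝ)
    (hf : Measurable f) (hbd : eLpNorm f ∞ μ ≠ ∞)
    (p : ℝ) (hp : 0 < p) (M : ℝ≥0∞)
    (h : eLpNorm f ∞ μ ≤ M * eLpNorm f (ENNReal.ofReal p) μ) :
    ∀ q r : ℝ, 0 < q → q ≤ p → q ≤ r →
      eLpNorm f (ENNReal.ofReal r) μ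
        ≤ M ^ ((1 / q - 1 / r) * p) * eLpNorm f (ENNReal.ofReal q) μ := by
  intro q r hq hqp hqr
  have hr : 0 < r := hq.trans_le hqr
  set A := eLpNorm f ∞ μ with hA
  set B := eLpNorm f (ENNReal.ofReal q) μ with hB
  -- Step A: A ≤ M ^ (p/q) * B
  have stepA : A ≤ M ^ (p / q) * B := by
    by_cases hA0 : A = 0
    · simp [hA0]
    -- interpolate p between ∞ and q
    have h1 : eLpNorm f (ENNReal.ofReal p) μ ≤ A ^ (1 - q / p) * B ^ (q / p) :=
      interp_aux μ f hf hq hqp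
    have h2 : A ≤ M * (A ^ (1 - q / p) * B ^ (q / p)) :=
      h.trans (mul_le_mul_right h1 M)
    have hcan : A ^ (q / p) ≤ M * B ^ (q / p) := by
      have hx0 : A ^ (1 - q / p) ≠ 0 := by
        simp [ENNReal.rpow_eq_zero_iff, hA0, hbd]
      have hxt : A ^ (1 - q / p) ≠ ∞ := by
        simp [ENNReal.rpow_eq_top_iff, hA0, hbd]
      rw [← ENNReal.mul_le_mul_iff_left hx0 hxt]
      calc A ^ (q / p) * A ^ (1 - q / p) = A := by
            rw [← ENNReal.rpow_add_of_nonneg _ _ (by positivity) (by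
              have : q / p ≤ 1 := (div_le_one hp).mpr hqp
              linarith)]
            simp
        _ ≤ M * (A ^ (1 - q / p) * B ^ (q / p)) := h2
        _ = M * B ^ (q / p) * A ^ (1 - q / p) := by ring
    have := ENNReal.rpow_le_rpow hcan (le_of_lt (by positivity : (0:ℝ) < p / q))
    have hexp : q / p * (p / q) = 1 := by field_simp
    rwa [ENNReal.mul_rpow_of_nonneg _ _ (by positivity), ← ENNReal.rpow_mul,
      ← ENNReal.rpow_mul, hexp, ENNReal.rpow_one, ENNReal.rpow_one] at this
  -- Step B: combine with interpolation at r
  have hinterp := interp_aux μ f hf hq hqr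
  have h3 : A ^ (1 - q / r) ≤ (M ^ (p / q) * B) ^ (1 - q / r) := by
    apply ENNReal.rpow_le_rpow stepA
    have : q / r ≤ 1 := (div_le_one hr).mpr hqr
    linarith
  calc eLpNorm f (ENNReal.ofReal r) μ ≤ A ^ (1 - q / r) * B ^ (q / r) := hinterp
    _ ≤ (M ^ (p / q) * B) ^ (1 - q / r) * B ^ (q / r) := mul_le_mul_left h3 _
    _ = M ^ (p / q * (1 - q / r)) * (B ^ (1 - q / r) * B ^ (q / r)) := by
        rw [ENNReal.mul_rpow_of_nonneg _ _ (by
              have : q / r ≤ 1 := (div_le_one hr).mpr hqr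
              linarith), ← ENNReal.rpow_mul, mul_assoc]
    _ = M ^ ((1 / q - 1 / r) * p) * B := by
        have hqr1 : q / r ≤ 1 := (div_le_one hr).mpr hqr
        rw [← ENNReal.rpow_add_of_nonneg _ _ (by linarith) (by positivity), sub_add_cancel,
          ENNReal.rpow_one]
        congr 1
        field_simp
end

section
/- For all real a ≥ 0, b ∈ ℝ, and p ∈ [1,2], the inequality |a + b|^p − a^p − p·a^{p−1}·b ≤ 13·|b|^p holds. -/
open Real

/-- Subadditivity of `x ↦ x^q` for `0 ≤ q ≤ 1` on nonneg reals. -/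
lemma stmt9_aux_subadd {x y q : ℝ} (hx : 0 ≤ x) (hy : 0 ≤ y) (hq : 0 ≤ q) (hq1 : q ≤ 1) :
    (x + y) ^ q ≤ x ^ q + y ^ q := by
  have := NNReal.rpow_add_le_add_rpow x.toNNReal y.toNNReal hq hq1
  have h := NNReal.coe_le_coe.2 this
  push_cast at h
  rwa [Real.coe_toNNReal _ hx, Real.coe_toNNReal _ hy] at h

/-- For all `a ≥ 0`, `b ∈ ℝ`, `1 ≤ p ≤ 2`:
`|a+b|^p - a^p - p·a^{p-1}·b ≤ 13·|b|^p` (real powers). -/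
theorem stmt9 (a b p : ℝ) (ha : 0 ≤ a) (hp1 : 1 ≤ p) (hp2 : p ≤ 2) :
    |a + b| ^ p - a ^ p - p * a ^ (p - 1) * b ≤ 13 * |b| ^ p := by
  have hp0 : 0 < p := lt_of_lt_of_le one_pos hp1
  have hq0 : (0:ℝ) ≤ p - 1 := by linarith
  have hq1 : p - 1 ≤ 1 := by linarith
  rcases lt_or_ge (a + b) 0 with hab | hab
  · -- a + b < 0 : then b < 0 and a ≤ -b = |b|
    have hb : b < 0 := by linarith
    have habs : |b| = -b := abs_of_neg hb
    have hale : a ≤ |b| := by rw [habs]; linarith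
    have h1 : |a + b| ^ p ≤ |b| ^ p := by
      apply Real.rpow_le_rpow (abs_nonneg _) _ hp0.le
      rw [abs_of_neg hab, habs]; linarith
    have h2 : a ^ (p-1) ≤ |b| ^ (p-1) := Real.rpow_le_rpow ha hale hq0
    have hbp : |b| ^ (p-1) * |b| = |b| ^ p := by
      rw [← Real.rpow_add_one (abs_ne_zero.2 hb.ne) (p-1)]; norm_num
    have h3 : -(p * a ^ (p-1) * b) ≤ 2 * |b| ^ p := by
      have heq : -(p * a ^ (p-1) * b) = p * (a ^ (p-1) * |b|) := by rw [habs]; ring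
      rw [heq, ← hbp]
      have h4 : a ^ (p-1) * |b| ≤ |b| ^ (p-1) * |b| :=
        mul_le_mul_of_nonneg_right h2 (abs_nonneg b)
      nlinarith [mul_nonneg (Real.rpow_nonneg ha (p-1)) (abs_nonneg b)]
    have h4 : (0:ℝ) ≤ a ^ p := Real.rpow_nonneg ha p
    nlinarith [Real.rpow_nonneg (abs_nonneg b) p]
  · -- a + b ≥ 0
    rcases eq_or_ne b 0 with rfl | hb
    · simp [abs_of_nonneg ha, Real.zero_rpow hp0.ne']
    -- MVT on f t = (a+t)^p between 0 and b
    have hf : ∀ x : ℝ, HasDerivAt (fun t => (a + t) ^ p) (p * (a + x) ^ (p-1)) x := by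
      intro x
      have h := (Real.hasDerivAt_rpow_const (x := a + x) (p := p) (Or.inr hp1))
      have h2 : HasDerivAt (fun t : ℝ => a + t) 1 x := (hasDerivAt_id x).const_add a
      simpa [mul_comm, Function.comp_def] using h.comp x h2
    have key : ∃ c, |c| ≤ |b| ∧ 0 ≤ a + c ∧
        (a + b) ^ p - a ^ p = p * (a + c) ^ (p-1) * b := by
      rcases lt_or_gt_of_ne hb with hbneg | hbpos
      · obtain ⟨c, hc, hceq⟩ := exists_hasDerivAt_eq_slope (fun t => (a + t) ^ p)
          (fun x => p * (a + x) ^ (p-1)) hbneg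
          (fun x _ => (hf x).continuousAt.continuousWithinAt)
          (fun x _ => hf x)
        refine ⟨c, ?_, by linarith [hc.1], ?_⟩
        · rw [abs_of_neg hbneg, abs_of_neg hc.2]; linarith [hc.1]
        · simp only [slope_def_field, add_zero, zero_sub] at hceq
          rw [eq_div_iff (neg_ne_zero.2 hbneg.ne)] at hceq
          linear_combination hceq
      · obtain ⟨c, hc, hceq⟩ := exists_hasDerivAt_eq_slope (fun t => (a + t) ^ p)
          (fun x => p * (a + x) ^ (p-1)) hbpos
          (fun x _ => (hf x).continuousAt.continuousWithinAt)
          (fun x _ => hf x)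
        refine ⟨c, ?_, by linarith [hc.1], ?_⟩
        · rw [abs_of_pos hbpos, abs_of_pos hc.1]; exact hc.2.le
        · simp only [slope_def_field, add_zero, sub_zero] at hceq
          rw [eq_div_iff hbpos.ne'] at hceq
          linear_combination -hceq
    obtain ⟨c, hcb, hac, heq⟩ := key
    have habs : |a + b| = a + b := abs_of_nonneg hab
    rw [habs]
    have hbp : |b| ^ (p-1) * |b| = |b| ^ p := by
      rw [← Real.rpow_add_one (abs_ne_zero.2 hb) (p-1)]; norm_num
    have hbound : |(a + c) ^ (p-1) - a ^ (p-1)| ≤ |c| ^ (p-1) := by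
      rcases le_total a (a + c) with h | h
      · have hc0 : 0 ≤ c := by linarith
        rw [abs_of_nonneg (sub_nonneg.2 (Real.rpow_le_rpow ha h hq0))]
        have := stmt9_aux_subadd ha hc0 hq0 hq1
        rw [abs_of_nonneg hc0]; linarith
      · have hc0 : c ≤ 0 := by linarith
        rw [abs_of_nonpos (sub_nonpos.2 (Real.rpow_le_rpow hac h hq0))]
        have h5 := stmt9_aux_subadd hac (neg_nonneg.2 hc0) hq0 hq1
        rw [show a + c + -c = a by ring] at h5
        rw [abs_of_nonpos hc0]
        linarith
    have hcabs : |c| ^ (p-1) ≤ |b| ^ (p-1) := Real.rpow_le_rpow (abs_nonneg c) hcb hq0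
    have hdiff : p * (a + c) ^ (p-1) * b - p * a ^ (p-1) * b ≤ 2 * |b| ^ p := by
      calc p * (a + c) ^ (p-1) * b - p * a ^ (p-1) * b
          = p * (((a + c) ^ (p-1) - a ^ (p-1)) * b) := by ring
        _ ≤ p * (|(a + c) ^ (p-1) - a ^ (p-1)| * |b|) := by
            apply mul_le_mul_of_nonneg_left _ hp0.le
            calc ((a + c) ^ (p-1) - a ^ (p-1)) * b
                ≤ |((a + c) ^ (p-1) - a ^ (p-1)) * b| := le_abs_self _
              _ = |(a + c) ^ (p-1) - a ^ (p-1)| * |b| := abs_mul _ _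
        _ ≤ 2 * (|b| ^ (p-1) * |b|) := by
            have h1 : |(a + c) ^ (p-1) - a ^ (p-1)| * |b| ≤ |b| ^ (p-1) * |b| :=
              mul_le_mul_of_nonneg_right (hbound.trans hcabs) (abs_nonneg b)
            nlinarith [mul_nonneg (abs_nonneg ((a + c) ^ (p-1) - a ^ (p-1))) (abs_nonneg b)]
        _ = 2 * |b| ^ p := by rw [hbp]
    nlinarith [Real.rpow_nonneg (abs_nonneg b) p]
end

section
/- Fix an integer n ≥ 1 and let P be a real polynomial of degree at most n on ℝ with P(1 + n^{−2}/3) = 1. Then sup_{x ∈ [−1,1]} |P(x)| ≥ 1/2. -/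
open Polynomial Real Finset

open Polynomial Real

lemma natDegree_T_pair : ∀ k : ℕ, (Chebyshev.T ℝ k).natDegree ≤ k ∧
    (Chebyshev.T ℝ (k+1)).natDegree ≤ k + 1 := by
  intro k
  induction k with
  | zero => constructor <;> simp [Chebyshev.T_zero, Chebyshev.T_one, natDegree_X_le]
  | succ m ih =>
    refine ⟨ih.2, ?_⟩
    push_cast
    have hc : ((m : ℤ) + 1 + 1) = (m : ℤ) + 2 := by ring
    rw [hc, Chebyshev.T_add_two]
    refine le_trans (natDegree_sub_le _ _) ?_
    have h2 : (2 * X * Chebyshev.T ℝ ((m:ℤ)+1)).natDegree ≤ m + 2 := by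
      refine le_trans natDegree_mul_le ?_
      have hx : (2 * X : ℝ[X]).natDegree ≤ 1 := le_trans natDegree_mul_le (by simp)
      have := ih.2
      push_cast at this
      omega
    have h3 := ih.1
    omega

lemma natDegree_T_le (k : ℕ) : (Chebyshev.T ℝ k).natDegree ≤ k := (natDegree_T_pair k).1

lemma T_eval_cosh (t : ℝ) : ∀ k : ℕ, (Chebyshev.T ℝ k).eval (Real.cosh t) = Real.cosh (k * t) := by
  have key : ∀ k : ℕ, (Chebyshev.T ℝ k).eval (Real.cosh t) = Real.cosh (k * t) ∧
      (Chebyshev.T ℝ (k+1)).eval (Real.cosh t) = Real.cosh ((k+1) * t) := by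
    intro k
    induction k with
    | zero => constructor <;> simp [Chebyshev.T_zero, Chebyshev.T_one]
    | succ m ih =>
      constructor
      · push_cast; exact ih.2
      push_cast
      have hc : ((m : ℤ) + 1 + 1) = (m : ℤ) + 2 := by ring
      rw [hc, Chebyshev.T_add_two]
      have i1 := ih.1
      have i2 := ih.2
      push_cast at i1 i2
      simp only [eval_sub, eval_mul, eval_X, eval_ofNat, i1, i2]
      rw [show ((m:ℝ)+1+1)*t = ((m:ℝ)+1)*t + t by ring,
        show (m:ℝ)*t = ((m:ℝ)+1)*t - t by ring, Real.cosh_add, Real.cosh_sub]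
      ring
  exact fun k => (key k).1

set_option maxHeartbeats 1000000 in
lemma T_le_two (n : ℕ) (hn : 1 ≤ n) :
    (Chebyshev.T ℝ n).eval (1 + ((n : ℝ) ^ 2)⁻¹ / 3) ≤ 2 := by
  rcases eq_or_lt_of_le hn with h1 | h2
  · -- n = 1
    rw [← h1]
    norm_num [Chebyshev.T_one]
  · -- n ≥ 2
    have hn2 : 2 ≤ n := h2
    have hn0 : (0:ℝ) < n := by positivity
    have hn2' : (2:ℝ) ≤ n := by exact_mod_cast hn2
    set δ : ℝ := ((n : ℝ) ^ 2)⁻¹ / 3 with hδdef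
    have hδ0 : 0 < δ := by positivity
    have hδn : (n:ℝ)^2 * δ = 1/3 := by
      rw [hδdef]; field_simp
    have hδle : δ ≤ 1/12 := by
      rw [hδdef]
      rw [div_le_div_iff₀ (by positivity) (by norm_num)]
      rw [inv_mul_le_iff₀ (by positivity)]
      nlinarith
    set x : ℝ := 1 + δ with hxdef
    have hx1 : 1 ≤ x := by simp [hxdef]; linarith
    have hx2 : 0 ≤ x^2 - 1 := by nlinarith
    set s : ℝ := Real.sqrt (x^2 - 1) with hsdef
    have hs0 : 0 ≤ s := Real.sqrt_nonneg _
    have hs2 : s^2 = x^2 - 1 := Real.sq_sqrt hx2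
    set a : ℝ := x + s with hadef
    have ha1 : 1 ≤ a := by simp [hadef]; linarith
    have ha0 : 0 < a := by linarith
    set t : ℝ := Real.log a with htdef
    have ht0 : 0 ≤ t := Real.log_nonneg ha1
    have hainv : a⁻¹ = x - s := by
      have h : a * (x - s) = 1 := by
        have : a * (x - s) = x^2 - s^2 := by rw [hadef]; ring
        rw [this, hs2]; ring
      field_simp at h ⊢
      linarith
    have hcosh : Real.cosh t = x := by
      rw [htdef, Real.cosh_eq, Real.exp_log ha0, ← Real.log_inv, Real.exp_log (by positivity), hainv]
      ring
    rw [← hcosh, T_eval_cosh]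
    -- cosh (n*t) = (exp(n t) + exp(-(n t)))/2
    rw [Real.cosh_eq]
    have he1 : Real.exp (-((n:ℝ)*t)) ≤ 1 := by
      rw [Real.exp_le_one_iff]
      have : 0 ≤ (n:ℝ)*t := by positivity
      linarith
    have he2 : Real.exp ((n:ℝ)*t) ≤ 3 := by
      have hexp : Real.exp ((n:ℝ)*t) = a ^ n := by
        rw [Real.exp_nat_mul, htdef, Real.exp_log ha0]
      rw [hexp]
      have haexp : a ≤ Real.exp (δ + s) := by
        have := Real.add_one_le_exp (δ + s)
        rw [hadef, hxdef]; linarith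
      have hpow : a ^ n ≤ Real.exp ((n:ℝ) * (δ + s)) := by
        calc a ^ n ≤ Real.exp (δ + s) ^ n := pow_le_pow_left₀ (le_of_lt ha0) haexp n
        _ = Real.exp ((n:ℝ) * (δ + s)) := by rw [← Real.exp_nat_mul]
      have hns : (n:ℝ) * s ≤ 5/6 := by
        have h1 : ((n:ℝ) * s)^2 = (n:ℝ)^2 * (2*δ + δ^2) := by
          have : x^2 - 1 = 2*δ + δ^2 := by rw [hxdef]; ring
          rw [mul_pow, hs2, this]
        have h2 : ((n:ℝ)*s)^2 ≤ 25/36 := by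
          rw [h1]
          have hd2 : (n:ℝ)^2 * δ^2 ≤ 1/36 := by
            have : (n:ℝ)^2 * δ^2 = ((n:ℝ)^2 * δ) * δ := by ring
            rw [this, hδn]
            linarith
          nlinarith
        nlinarith [mul_nonneg (le_of_lt hn0) hs0]
      have hnd : (n:ℝ) * δ ≤ 1/6 := by
        have : (n:ℝ) * δ = ((n:ℝ)^2 * δ) / n := by field_simp
        rw [this, hδn]
        rw [div_le_iff₀ hn0]
        linarith
      have harg : (n:ℝ) * (δ + s) ≤ 1 := by
        have hexpand : (n:ℝ)*(δ+s) = (n:ℝ)*δ + (n:ℝ)*s := by ring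
        linarith
      calc a ^ n ≤ Real.exp ((n:ℝ) * (δ + s)) := hpow
      _ ≤ Real.exp 1 := Real.exp_le_exp.mpr harg
      _ ≤ 3 := by linarith [Real.exp_one_lt_d9]
    linarith


/-- If `P` is a real polynomial of degree at most `n` (`n ≥ 1`) with
`P(1 + n^{-2}/3) = 1`, then `sup_{x ∈ [-1,1]} |P(x)| ≥ 1/2`. -/
theorem stmt10 (n : ℕ) (hn : 1 ≤ n) (P : Polynomial ℝ) (hdeg : P.natDegree ≤ n)
    (hval : P.eval (1 + ((n : ℝ) ^ 2)⁻¹ / 3) = 1) :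
    (1 : ℝ) / 2 ≤ sSup ((fun x => |P.eval x|) '' Set.Icc (-1 : ℝ) 1) := by
  have hn0 : (0:ℝ) < n := by exact_mod_cast hn
  set δ : ℝ := ((n : ℝ) ^ 2)⁻¹ / 3 with hδdef
  have hδ0 : 0 < δ := by positivity
  set x : ℝ := 1 + δ with hxdef
  set v : ℕ → ℝ := fun i => Real.cos (i * π / n) with hvdef
  set S : Finset ℕ := Finset.range (n+1) with hSdef
  -- nodes in [0, π]
  have hmem : ∀ i, i ≤ n → ((i:ℝ) * π / n) ∈ Set.Icc (0:ℝ) π := by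
    intro i hi
    constructor
    · positivity
    · rw [div_le_iff₀ hn0]
      have : (i:ℝ) ≤ n := by exact_mod_cast hi
      nlinarith [Real.pi_pos]
  have hanti : ∀ i j : ℕ, i < j → j ≤ n → v j < v i := by
    intro i j hij hj
    apply Real.strictAntiOn_cos (hmem i (le_of_lt (lt_of_lt_of_le hij hj))) (hmem j hj)
    have hij' : (i:ℝ) < j := by exact_mod_cast hij
    have hπ := Real.pi_pos
    gcongr
  have hinj : Set.InjOn v S := by
    intro a ha b hb hab
    simp only [hSdef, Finset.coe_range, Set.mem_Iio] at ha hb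
    by_contra hne
    rcases lt_or_gt_of_ne hne with h | h
    · exact absurd hab (ne_of_gt (hanti a b h (by omega)))
    · exact absurd hab (ne_of_lt (hanti b a h (by omega)))
  have hvle : ∀ i, v i ≤ 1 := fun i => Real.cos_le_one _
  have hvge : ∀ i, -1 ≤ v i := fun i => Real.neg_one_le_cos _
  have hxgt : ∀ i, v i < x := fun i => lt_of_le_of_lt (hvle i) (by rw [hxdef]; linarith)
  set B : ℕ → ℝ := fun i => (Lagrange.basis S v i).eval x with hBdef
  -- T values at nodes
  have hTnode : ∀ i, i ≤ n → (Chebyshev.T ℝ n).eval (v i) = (-1)^i := by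
    intro i hi
    rw [hvdef]
    simp only []
    rw [Chebyshev.T_real_cos]
    have harg : ((n:ℤ):ℝ) * ((i:ℝ) * π / n) = (i:ℝ) * π := by
      push_cast
      field_simp
    rw [harg]
    have := Real.cos_nat_mul_pi_sub 0 i
    simpa using this
  -- sign of B
  have hsign : ∀ i ∈ S, (Chebyshev.T ℝ n).eval (v i) * B i = |B i| := by
    intro i hiS
    have hi : i ≤ n := by simpa [hSdef, Nat.lt_succ_iff] using hiS
    set g : ℕ → ℝ := fun j => (v i - v j)⁻¹ * (x - v j) with hgdef
    have hBprod : B i = ∏ j ∈ S.erase i, g j := by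
      rw [hBdef]
      simp only [Lagrange.basis, Lagrange.basisDivisor, eval_prod, eval_mul, eval_C, eval_sub,
        eval_X, hgdef]
    have hsplit : S.erase i = Finset.range i ∪ Finset.Ico (i+1) (n+1) := by
      ext j
      simp only [hSdef, Finset.mem_erase, Finset.mem_range, Finset.mem_union, Finset.mem_Ico]
      omega
    have hdisj : Disjoint (Finset.range i) (Finset.Ico (i+1) (n+1)) := by
      rw [Finset.disjoint_left]
      intro j hj1 hj2
      simp only [Finset.mem_range] at hj1
      simp only [Finset.mem_Ico] at hj2
      omega
    have hBsplit : B i = (∏ j ∈ Finset.range i, g j) * (∏ j ∈ Finset.Ico (i+1) (n+1), g j) := by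
      rw [hBprod, hsplit, Finset.prod_union hdisj]
    have hneg : ∀ j ∈ Finset.range i, 0 ≤ -(g j) := by
      intro j hj
      simp only [Finset.mem_range] at hj
      have hvij : v i < v j := hanti j i hj hi
      have h1 : (v i - v j)⁻¹ ≤ 0 := inv_nonpos.mpr (by linarith)
      have h2 : 0 ≤ x - v j := by linarith [hxgt j]
      have := mul_nonpos_of_nonpos_of_nonneg h1 h2
      rw [hgdef]; simp only []; linarith
    have hpos : ∀ j ∈ Finset.Ico (i+1) (n+1), 0 ≤ g j := by
      intro j hj
      simp only [Finset.mem_Ico] at hj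
      have hvij : v j < v i := hanti i j hj.1 (by omega)
      have h1 : 0 ≤ (v i - v j)⁻¹ := inv_nonneg.mpr (by linarith)
      have h2 : 0 ≤ x - v j := by linarith [hxgt j]
      rw [hgdef]; exact mul_nonneg h1 h2
    have hkey : 0 ≤ (-1:ℝ)^i * B i := by
      have hprodneg : ∏ j ∈ Finset.range i, (-(g j)) = (-1:ℝ)^i * ∏ j ∈ Finset.range i, g j := by
        calc ∏ j ∈ Finset.range i, (-(g j)) = ∏ j ∈ Finset.range i, ((-1) * g j) := by
              apply Finset.prod_congr rfl; intros; ring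
        _ = (∏ _j ∈ Finset.range i, (-1:ℝ)) * ∏ j ∈ Finset.range i, g j :=
              Finset.prod_mul_distrib
        _ = (-1:ℝ)^i * ∏ j ∈ Finset.range i, g j := by
              rw [Finset.prod_const, Finset.card_range]
      rw [hBsplit, ← mul_assoc, ← hprodneg]
      exact mul_nonneg (Finset.prod_nonneg hneg) (Finset.prod_nonneg hpos)
    have habs : |B i| = (-1:ℝ)^i * B i := by
      have h1 : |(-1:ℝ)^i * B i| = |B i| := by
        rw [abs_mul, abs_pow, abs_neg, abs_one, one_pow, one_mul]
      rw [← h1, abs_of_nonneg hkey]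
    rw [hTnode i hi, habs]
  -- degrees
  have hcard : (#S : WithBot ℕ) = ((n+1 : ℕ) : WithBot ℕ) := by rw [hSdef, Finset.card_range]
  have hdegP : P.degree < #S := by
    rw [hSdef, Finset.card_range]
    calc P.degree ≤ (P.natDegree : WithBot ℕ) := degree_le_natDegree
    _ < ((n+1 : ℕ) : WithBot ℕ) := by exact_mod_cast Nat.lt_succ_of_le hdeg
  have hdegT : (Chebyshev.T ℝ n).degree < #S := by
    rw [hSdef, Finset.card_range]
    calc (Chebyshev.T ℝ n).degree ≤ ((Chebyshev.T ℝ n).natDegree : WithBot ℕ) :=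
      degree_le_natDegree
    _ < ((n+1 : ℕ) : WithBot ℕ) := by exact_mod_cast Nat.lt_succ_of_le (natDegree_T_le n)
  -- interpolation identities
  have hPsum : P.eval x = ∑ i ∈ S, P.eval (v i) * B i := by
    conv_lhs => rw [Lagrange.eq_interpolate hinj hdegP]
    simp [Lagrange.interpolate_apply, eval_finset_sum, hBdef]
  have hTsum : (Chebyshev.T ℝ n).eval x = ∑ i ∈ S, (Chebyshev.T ℝ n).eval (v i) * B i := by
    conv_lhs => rw [Lagrange.eq_interpolate hinj hdegT]
    simp [Lagrange.interpolate_apply, eval_finset_sum, hBdef]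
  -- sup facts
  set K := (fun y => |P.eval y|) '' Set.Icc (-1 : ℝ) 1 with hKdef
  have hKcomp : IsCompact K := isCompact_Icc.image (P.continuous.abs)
  have hbdd : BddAbove K := hKcomp.bddAbove
  set M := sSup K with hMdef
  have hle : ∀ y, y ∈ Set.Icc (-1:ℝ) 1 → |P.eval y| ≤ M := by
    intro y hy
    exact le_csSup hbdd ⟨y, hy, rfl⟩
  have hM0 : 0 ≤ M := le_trans (abs_nonneg _) (hle 0 (by norm_num))
  -- final chain
  have hPx : P.eval x = 1 := hval
  have hchain : (1:ℝ) ≤ M * ((Chebyshev.T ℝ n).eval x) := by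
    calc (1:ℝ) = |∑ i ∈ S, P.eval (v i) * B i| := by rw [← hPsum, hPx]; norm_num
    _ ≤ ∑ i ∈ S, |P.eval (v i) * B i| := Finset.abs_sum_le_sum_abs _ _
    _ ≤ ∑ i ∈ S, M * |B i| := by
        apply Finset.sum_le_sum
        intro i hi
        rw [abs_mul]
        exact mul_le_mul_of_nonneg_right (hle (v i) ⟨hvge i, hvle i⟩) (abs_nonneg _)
    _ = M * ∑ i ∈ S, |B i| := by rw [Finset.mul_sum]
    _ = M * ((Chebyshev.T ℝ n).eval x) := by
        rw [hTsum]
        congr 1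
        exact (Finset.sum_congr rfl hsign).symm
  have hT2 : (Chebyshev.T ℝ n).eval x ≤ 2 := T_le_two n hn
  nlinarith
end

section
/- Let ρ_n(x) = n^{−2} + n^{−1}√(1 − x²) for x ∈ [−1,1]. For any integers n, m ≥ 1 and any y ∈ [−1,1], there exists a real polynomial P of degree at most n such that P(y) = 1 and |P(x)| ≤ c₁·(ρ_n(y)/(ρ_n(y) + |x − y|))^m for all x ∈ [−1,1], where c₁ > 0 depends only on m. -/
open Real Polynomial Set

private lemma s11_sin_nat_mul (k : ℕ) (t : ℝ) : |Real.sin (k * t)| ≤ k * |Real.sin t| := by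
  induction k with
  | zero => simp
  | succ n ih =>
    have h : ((n:ℝ)+1) * t = n*t + t := by ring
    push_cast
    rw [h, Real.sin_add]
    calc |Real.sin (n*t) * Real.cos t + Real.cos (n*t) * Real.sin t|
        ≤ |Real.sin (n*t) * Real.cos t| + |Real.cos (n*t) * Real.sin t| := abs_add_le _ _
      _ ≤ |Real.sin (n*t)| * 1 + 1 * |Real.sin t| := by
          rw [abs_mul, abs_mul]
          gcongr
          · exact Real.abs_cos_le_one t
          · exact Real.abs_cos_le_one _
      _ ≤ (n:ℝ) * |Real.sin t| + 1 * |Real.sin t| := by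
          have := ih
          push_cast at this ⊢
          nlinarith [abs_nonneg (Real.sin t)]
      _ = ((n:ℝ)+1) * |Real.sin t| := by ring

private lemma s11_sin_lip (a b : ℝ) : |Real.sin a - Real.sin b| ≤ |a - b| := by
  rw [Real.sin_sub_sin]
  have h1 : |Real.sin ((a-b)/2)| ≤ |(a-b)/2| := Real.abs_sin_le_abs
  have h2 : |Real.cos ((a+b)/2)| ≤ 1 := Real.abs_cos_le_one _
  rw [abs_mul, abs_mul]
  have : |(2:ℝ)| = 2 := by norm_num
  rw [this]
  calc 2 * |Real.sin ((a-b)/2)| * |Real.cos ((a+b)/2)| ≤ 2 * |(a-b)/2| * 1 := by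
        gcongr
    _ = |a - b| := by rw [abs_div, abs_two]; ring

private lemma s11_half_le_sin {t : ℝ} (ht : |t| ≤ π/2) : |t|/2 ≤ |Real.sin t| := by
  have := Real.mul_abs_le_abs_sin (x := t) ht
  have hπ : (1:ℝ)/2 ≤ 2/π := by
    rw [div_le_div_iff₀ (by norm_num) Real.pi_pos]
    nlinarith [Real.pi_le_four]
  nlinarith [abs_nonneg t]

-- sin of an average lower bound
private lemma s11_sin_avg {a φ : ℝ} (ha0 : 0 ≤ a) (ha1 : a ≤ π) (hφ0 : 0 ≤ φ) (hφ1 : φ ≤ π) :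
    Real.sin a / 2 ≤ Real.sin ((φ + a)/2) := by
  have hs2 : Real.sin a = 2 * Real.sin (a/2) * Real.cos (a/2) := by
    have : a = 2 * (a/2) := by ring
    rw [this, Real.sin_two_mul]; ring_nf
  have hsa2 : 0 ≤ Real.sin (a/2) := Real.sin_nonneg_of_nonneg_of_le_pi (by linarith) (by linarith [Real.pi_pos])
  have hca2 : 0 ≤ Real.cos (a/2) := Real.cos_nonneg_of_mem_Icc ⟨by linarith [Real.pi_pos], by linarith⟩
  set u := (φ + a)/2 with hu
  rcases le_or_gt u (π/2) with h | h
  · have h1 : Real.sin (a/2) ≤ Real.sin u := by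
      apply Real.sin_le_sin_of_le_of_le_pi_div_two (by linarith [Real.pi_pos]) h
      rw [hu]; linarith
    nlinarith [Real.sin_le_one (a/2), Real.cos_le_one (a/2)]
  · have h1 : Real.cos (a/2) ≤ Real.sin u := by
      rw [← Real.sin_pi_sub]
      have : Real.cos (a/2) = Real.sin (π/2 - a/2) := (Real.sin_pi_div_two_sub _).symm
      rw [this]
      apply Real.sin_le_sin_of_le_of_le_pi_div_two (by linarith [Real.pi_pos]) (by linarith)
      rw [hu]; linarith
    nlinarith [Real.sin_le_one (a/2), Real.cos_le_one (a/2)]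

-- sin b ≥ sin c for b in [c, π - c]
private lemma s11_sin_ge {c b : ℝ} (hc0 : 0 ≤ c) (hc2 : c ≤ π/2) (h1 : c ≤ b) (h2 : b ≤ π - c) :
    Real.sin c ≤ Real.sin b := by
  rcases le_or_gt b (π/2) with h | h
  · exact Real.sin_le_sin_of_le_of_le_pi_div_two (by linarith) h h1
  · have hb : Real.sin b = Real.sin (π - b) := (Real.sin_pi_sub b).symm
    rw [hb]
    exact Real.sin_le_sin_of_le_of_le_pi_div_two (by linarith [Real.pi_pos]) (by linarith) (by linarith)

private lemma s11_natDegree_T_le : ∀ n : ℕ, (Polynomial.Chebyshev.T ℝ n).natDegree ≤ n := by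
  intro n
  induction n using Nat.strong_induction_on with
  | _ n ih =>
    match n with
    | 0 => simp [Polynomial.Chebyshev.T_zero]
    | 1 => simp [Polynomial.Chebyshev.T_one]
    | (n+2) =>
      have h : ((n+2:ℕ) : ℤ) = (n:ℤ) + 2 := by push_cast; ring
      rw [h, Polynomial.Chebyshev.T_add_two]
      apply le_trans (Polynomial.natDegree_sub_le _ _)
      have h1 : (Polynomial.Chebyshev.T ℝ ((n:ℤ)+1)).natDegree ≤ n+1 := by
        have := ih (n+1) (by omega)
        rwa [show (((n+1:ℕ)):ℤ) = (n:ℤ)+1 by push_cast; ring] at this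
      have h2 : (Polynomial.Chebyshev.T ℝ (n:ℤ)).natDegree ≤ n := ih n (by omega)
      have h3 : (2 * Polynomial.X * Polynomial.Chebyshev.T ℝ ((n:ℤ)+1)).natDegree ≤ n+2 := by
        apply le_trans (Polynomial.natDegree_mul_le)
        have : (2 * Polynomial.X : Polynomial ℝ).natDegree ≤ 1 := by
          apply le_trans (Polynomial.natDegree_mul_le)
          simp
        omega
      omega

private lemma s11_choose (k : ℕ) (hk : 1 ≤ k) {θ : ℝ} (h0 : 0 ≤ θ) (h1 : θ ≤ π) :
    ∃ i : ℕ, 1 ≤ i ∧ i ≤ k ∧ |θ - (2*(i:ℝ)-1)*π/(2*k)| ≤ π/(2*k) := by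
  have hkR : (0:ℝ) < k := by exact_mod_cast hk
  have h2k : (0:ℝ) < 2*k := by linarith
  set j := ⌊(k:ℝ)*θ/π⌋₊ with hj
  rcases le_or_gt (j+1) k with hle | hlt
  · refine ⟨j+1, by omega, hle, ?_⟩
    have hj1 : (j:ℝ)*π ≤ k*θ := by
      have := Nat.floor_le (show (0:ℝ) ≤ (k:ℝ)*θ/π by positivity)
      rw [← hj] at this
      calc (j:ℝ)*π ≤ ((k:ℝ)*θ/π)*π := by nlinarith [Real.pi_pos]
        _ = k*θ := by field_simp
    have hj2 : (k:ℝ)*θ < ((j:ℝ)+1)*π := by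
      have := Nat.lt_floor_add_one ((k:ℝ)*θ/π)
      rw [← hj] at this
      calc (k:ℝ)*θ = ((k:ℝ)*θ/π)*π := by field_simp
        _ < ((j:ℝ)+1)*π := by nlinarith [Real.pi_pos]
    have e1 : θ - (2*((j:ℕ)+1:ℝ)-1)*π/(2*k) = (2*(k:ℝ)*θ - (2*j+1)*π)/(2*k) := by
      field_simp; ring
    push_cast
    push_cast at e1
    rw [e1, abs_div, abs_of_pos h2k]
    gcongr
    rw [abs_le]
    constructor
    · nlinarith
    · nlinarith
  · have hkj : k ≤ ⌊(k:ℝ)*θ/π⌋₊ := by rw [← hj]; omega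
    have hjk : (k:ℝ) ≤ (k:ℝ)*θ/π :=
      (Nat.le_floor_iff (show (0:ℝ) ≤ (k:ℝ)*θ/π by positivity)).mp hkj
    have hθπ : θ = π := by
      have : (k:ℝ)*π ≤ (k:ℝ)*θ := by
        have := mul_le_mul_of_nonneg_right hjk Real.pi_pos.le
        calc (k:ℝ)*π ≤ ((k:ℝ)*θ/π)*π := this
          _ = (k:ℝ)*θ := by field_simp
      nlinarith
    refine ⟨k, hk, le_refl k, ?_⟩
    have e2 : θ - (2*(k:ℝ)-1)*π/(2*k) = π/(2*k) := by
      rw [hθπ]; field_simp; ring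
    rw [e2, abs_of_pos (by positivity)]

set_option maxHeartbeats 1000000 in
private lemma s11_core (k : ℕ) (hk : 1 ≤ k) (y : ℝ) (hy : y ∈ Set.Icc (-1:ℝ) 1) :
    ∃ Q : Polynomial ℝ, Q.natDegree + 1 ≤ k ∧ Q.eval y = 1 ∧
      ∀ x ∈ Set.Icc (-1:ℝ) 1,
        |Q.eval x| * ((((k:ℝ)^2)⁻¹ + (k:ℝ)⁻¹ * Real.sqrt (1 - y^2)) + |x - y|)
          ≤ 512 * (((k:ℝ)^2)⁻¹ + (k:ℝ)⁻¹ * Real.sqrt (1 - y^2)) := by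
  have hkR : (0:ℝ) < k := by exact_mod_cast hk
  have hπ : (0:ℝ) < π := Real.pi_pos
  have hπ4 : π ≤ 4 := by nlinarith [Real.pi_le_four]
  obtain ⟨hy1, hy2⟩ := hy
  set θ := Real.arccos y with hθdef
  have hθ0 : 0 ≤ θ := Real.arccos_nonneg y
  have hθπ : θ ≤ π := Real.arccos_le_pi y
  have hcosθ : Real.cos θ = y := Real.cos_arccos hy1 hy2
  have hsinθ : Real.sin θ = Real.sqrt (1 - y^2) := Real.sin_arccos y
  set ρ := (((k:ℝ)^2)⁻¹ + (k:ℝ)⁻¹ * Real.sqrt (1 - y^2)) with hρdef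
  have hρ' : ρ = ((k:ℝ)*k)⁻¹ + (k:ℝ)⁻¹ * Real.sin θ := by rw [hρdef, hsinθ, sq]
  have hsθ0 : 0 ≤ Real.sin θ := Real.sin_nonneg_of_nonneg_of_le_pi hθ0 hθπ
  obtain ⟨i, hi1, hik, hδ⟩ := s11_choose k hk hθ0 hθπ
  set θt := (2*(i:ℝ)-1)*π/(2*(k:ℝ)) with hθtdef
  have hiR : 1 ≤ (i:ℝ) := by exact_mod_cast hi1
  have hikR : (i:ℝ) ≤ (k:ℝ) := by exact_mod_cast hik
  have hθtformula : θt = (2*(i:ℝ)-1)*(π/(2*k)) := by rw [hθtdef]; ring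
  have hπ2k : 0 < π/(2*(k:ℝ)) := by positivity
  have hπ2k2 : π/(2*(k:ℝ)) ≤ π/2 := by
    rw [div_le_div_iff₀ (by linarith) (by norm_num)]; nlinarith
  have hθt1 : π/(2*(k:ℝ)) ≤ θt := by rw [hθtformula]; nlinarith
  have hθt2 : θt ≤ π - π/(2*(k:ℝ)) := by
    rw [hθtformula]
    have : π - π/(2*(k:ℝ)) = (2*(k:ℝ)-1)*(π/(2*k)) := by field_simp
    rw [this]; nlinarith
  have hθtpos : 0 < θt := lt_of_lt_of_le hπ2k hθt1
  have hθtltπ : θt < π := lt_of_le_of_lt hθt2 (by linarith)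
  set s := Real.sin θt with hsdef
  have hs0 : 0 < s := Real.sin_pos_of_pos_of_lt_pi hθtpos hθtltπ
  have hs1 : 1 ≤ (k:ℝ) * s := by
    have h1 : Real.sin (π/(2*(k:ℝ))) ≤ s := s11_sin_ge hπ2k.le hπ2k2 hθt1 hθt2
    have h2 : 2/π * (π/(2*(k:ℝ))) ≤ Real.sin (π/(2*(k:ℝ))) := Real.mul_le_sin hπ2k.le hπ2k2
    have h3 : 2/π * (π/(2*(k:ℝ))) = 1/(k:ℝ) := by field_simp
    rw [h3] at h2
    have h4 : 1/(k:ℝ) ≤ s := le_trans h2 h1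
    rw [div_le_iff₀ hkR] at h4
    linarith
  have hkθt : (k:ℝ) * θt = i*π - π/2 := by rw [hθtdef]; field_simp
  have hcoskθt : Real.cos ((k:ℝ)*θt) = 0 := by
    rw [hkθt, Real.cos_sub, Real.cos_pi_div_two, Real.sin_pi_div_two, Real.sin_nat_mul_pi]
    ring
  have hsinkθt : |Real.sin ((k:ℝ)*θt)| = 1 := by
    have h := Real.sin_sq_add_cos_sq ((k:ℝ)*θt)
    rw [hcoskθt] at h
    have h2 : (|Real.sin ((k:ℝ)*θt)| - 1) * (|Real.sin ((k:ℝ)*θt)| + 1) = 0 := by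
      have h3 := sq_abs (Real.sin ((k:ℝ)*θt))
      linear_combination h3 + h
    rcases mul_eq_zero.mp h2 with h' | h'
    · linarith
    · exfalso; linarith [abs_nonneg (Real.sin ((k:ℝ)*θt))]
  have h1k : 1/(k:ℝ) ≤ s := by rw [div_le_iff₀ hkR]; linarith
  have hπ4k : π/(4*(k:ℝ)) ≤ s := by
    have e : 1/(k:ℝ) - π/(4*(k:ℝ)) = (4-π)/(4*(k:ℝ)) := by field_simp
    have h2 : (0:ℝ) ≤ (4-π)/(4*(k:ℝ)) := div_nonneg (by linarith) (by positivity)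
    linarith
  have hπ2ks : π/(2*(k:ℝ)) ≤ 2*s := by
    have e : 2*(1/(k:ℝ)) - π/(2*(k:ℝ)) = (4-π)/(2*(k:ℝ)) := by field_simp; ring
    have h2 : (0:ℝ) ≤ (4-π)/(2*(k:ℝ)) := div_nonneg (by linarith) (by positivity)
    linarith
  set xt := Real.cos θt with hxtdef
  have hroot : (Polynomial.Chebyshev.T ℝ (k:ℕ)).eval xt = 0 := by
    rw [hxtdef, Polynomial.Chebyshev.T_real_cos]
    push_cast
    exact hcoskθt
  obtain ⟨S, hS⟩ : ∃ S, Polynomial.Chebyshev.T ℝ (k:ℕ) = (X - C xt) * S :=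
    Polynomial.dvd_iff_isRoot.mpr hroot
  have key : ∀ φ : ℝ, S.eval (Real.cos φ) * (Real.cos φ - xt) = Real.cos ((k:ℝ)*φ) := by
    intro φ
    have h1 := Polynomial.Chebyshev.T_real_cos φ (k:ℕ)
    rw [hS] at h1
    simp only [Polynomial.eval_mul, Polynomial.eval_sub, Polynomial.eval_X, Polynomial.eval_C] at h1
    push_cast at h1
    linarith [h1]
  have key2 : ∀ φ : ℝ, S.eval (Real.cos φ) * (Real.sin ((φ+θt)/2) * Real.sin ((φ-θt)/2)) =
      Real.sin ((k:ℝ)*((φ+θt)/2)) * Real.sin ((k:ℝ)*((φ-θt)/2)) := by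
    intro φ
    have h1 := key φ
    have h2 : Real.cos φ - xt = -(2 * Real.sin ((φ+θt)/2) * Real.sin ((φ-θt)/2)) := by
      rw [hxtdef, Real.cos_sub_cos]
      ring
    have h4 : Real.cos ((k:ℝ)*φ) - Real.cos ((k:ℝ)*θt) =
        -(2 * Real.sin ((k:ℝ)*((φ+θt)/2)) * Real.sin ((k:ℝ)*((φ-θt)/2))) := by
      rw [Real.cos_sub_cos]
      have e1 : ((k:ℝ)*φ + (k:ℝ)*θt)/2 = (k:ℝ)*((φ+θt)/2) := by ring
      have e2 : ((k:ℝ)*φ - (k:ℝ)*θt)/2 = (k:ℝ)*((φ-θt)/2) := by ring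
      rw [e1, e2]
      ring
    rw [h2] at h1
    rw [hcoskθt] at h4
    linear_combination (-1/2 : ℝ) * h1 + (-1/2 : ℝ) * h4
  have hSxt : |S.eval xt| * s = k := by
    have hd : Polynomial.derivative (Polynomial.Chebyshev.T ℝ (k:ℕ)) =
        ((k:ℕ):ℤ) * Polynomial.Chebyshev.U ℝ (((k:ℕ):ℤ) - 1) :=
      Polynomial.Chebyshev.T_derivative_eq_U (R := ℝ) (k:ℕ)
    have hd2 : Polynomial.derivative ((X - C xt) * S) =
        (X - C xt) * Polynomial.derivative S + S := by
      rw [Polynomial.derivative_mul, Polynomial.derivative_sub, Polynomial.derivative_X,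
        Polynomial.derivative_C, sub_zero, one_mul]
      ring
    have he : S.eval xt = (Polynomial.derivative (Polynomial.Chebyshev.T ℝ (k:ℕ))).eval xt := by
      rw [hS, hd2, Polynomial.eval_add, Polynomial.eval_mul, Polynomial.eval_sub,
        Polynomial.eval_X, Polynomial.eval_C, sub_self, zero_mul, zero_add]
    have hU := Polynomial.Chebyshev.U_real_cos θt (((k:ℕ):ℤ) - 1)
    have hU2 : (Polynomial.Chebyshev.U ℝ (((k:ℕ):ℤ)-1)).eval xt * s = Real.sin ((k:ℝ)*θt) := by
      rw [hxtdef, hsdef]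
      rw [hU]
      norm_num
    have he2 : S.eval xt * s = (k:ℝ) * Real.sin ((k:ℝ)*θt) := by
      rw [he, hd]
      simp only [Polynomial.eval_mul, Polynomial.eval_intCast]
      push_cast
      rw [mul_assoc, hU2]
    have := abs_mul (S.eval xt) s
    rw [he2] at this
    rw [abs_of_pos hs0] at this
    rw [abs_mul, hsinkθt, abs_of_pos hkR] at this
    linarith [this]
  have B1 : ∀ φ : ℝ, |S.eval (Real.cos φ)| * |Real.cos φ - xt| ≤ 1 := by
    intro φ
    rw [← abs_mul, key φ]
    exact Real.abs_cos_le_one _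
  have B2 : ∀ φ : ℝ, 0 ≤ φ → φ ≤ π → |S.eval (Real.cos φ)| * s ≤ 2*(k:ℝ) := by
    intro φ h0 h1
    by_cases hc : Real.cos φ = xt
    · rw [hc]; linarith [hSxt]
    · have hsu : 0 < Real.sin ((φ+θt)/2) :=
        Real.sin_pos_of_pos_of_lt_pi (by linarith) (by linarith)
      have hsu2 : s/2 ≤ Real.sin ((φ+θt)/2) := s11_sin_avg hθtpos.le hθtltπ.le h0 h1
      have hvne : Real.sin ((φ-θt)/2) ≠ 0 := by
        intro hv0
        have h5 := (Real.sin_eq_zero_iff_of_lt_of_lt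
          (by linarith : -π < (φ-θt)/2) (by linarith : (φ-θt)/2 < π)).mp hv0
        apply hc
        rw [hxtdef, show φ = θt by linarith]
      have h1' := key2 φ
      have habs : |S.eval (Real.cos φ)| * (Real.sin ((φ+θt)/2) * |Real.sin ((φ-θt)/2)|) =
          |Real.sin ((k:ℝ)*((φ+θt)/2))| * |Real.sin ((k:ℝ)*((φ-θt)/2))| := by
        conv_lhs => rw [← abs_of_pos hsu]
        rw [← abs_mul, ← abs_mul, h1', abs_mul]
      have hb1 := s11_sin_nat_mul k ((φ-θt)/2)
      have hb2 : |Real.sin ((k:ℝ)*((φ+θt)/2))| ≤ 1 :=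
        abs_le.mpr ⟨Real.neg_one_le_sin _, Real.sin_le_one _⟩
      have hsv0 : 0 < |Real.sin ((φ-θt)/2)| := abs_pos.mpr hvne
      have e1 : |S.eval (Real.cos φ)| * Real.sin ((φ+θt)/2) ≤ (k:ℝ) := by
        have h6 : |S.eval (Real.cos φ)| * Real.sin ((φ+θt)/2) * |Real.sin ((φ-θt)/2)| ≤
            (k:ℝ) * |Real.sin ((φ-θt)/2)| := by
          calc |S.eval (Real.cos φ)| * Real.sin ((φ+θt)/2) * |Real.sin ((φ-θt)/2)|
              = |Real.sin ((k:ℝ)*((φ+θt)/2))| * |Real.sin ((k:ℝ)*((φ-θt)/2))| := by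
                rw [← habs]; ring
            _ ≤ 1 * ((k:ℝ) * |Real.sin ((φ-θt)/2)|) := by
                apply mul_le_mul hb2 hb1 (abs_nonneg _) (by norm_num)
            _ = (k:ℝ) * |Real.sin ((φ-θt)/2)| := by ring
        exact le_of_mul_le_mul_right h6 hsv0
      linarith only [e1, mul_le_mul_of_nonneg_left hsu2 (abs_nonneg (S.eval (Real.cos φ)))]
  have hSy : (k:ℝ) ≤ |S.eval y| * (8*s) := by
    by_cases hc : y = xt
    · rw [hc]
      have e : |S.eval xt| * (8*s) = 8 * (|S.eval xt| * s) := by ring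
      rw [e, hSxt]; linarith
    · have hθne : θ ≠ θt := by
        intro h; apply hc; rw [← hcosθ, h, hxtdef]
      set v := (θ - θt)/2 with hvdef
      have hvabs : |v| = |θ - θt|/2 := by rw [hvdef, abs_div]; norm_num
      have hδ2 : |v| ≤ π/(4*(k:ℝ)) := by
        rw [hvabs]
        have e : π/(4*(k:ℝ)) = (π/(2*(k:ℝ)))/2 := by ring
        rw [e]; linarith [hδ]
      have hvne : v ≠ 0 := by
        intro h; apply hθne; rw [hvdef] at h; linarith [h]
      have hvπ : |v| ≤ π/4 := by
        have : π/(4*(k:ℝ)) ≤ π/4 := by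
          rw [div_le_div_iff₀ (by positivity) (by norm_num)]; nlinarith
        linarith
      have habsv := abs_le.mp hvπ
      have hsinvne : Real.sin v ≠ 0 := by
        intro h
        exact hvne ((Real.sin_eq_zero_iff_of_lt_of_lt (by linarith) (by linarith)).mp h)
      have hkv : |(k:ℝ)*v| ≤ π/4 := by
        rw [abs_mul, abs_of_pos hkR]
        calc (k:ℝ) * |v| ≤ (k:ℝ) * (π/(4*(k:ℝ))) := by
              apply mul_le_mul_of_nonneg_left hδ2 hkR.le
          _ = π/4 := by field_simp
      have hsinkv : (k:ℝ)*|v|/2 ≤ |Real.sin ((k:ℝ)*v)| := by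
        have h7 := s11_half_le_sin (t := (k:ℝ)*v) (le_trans hkv (by linarith))
        rw [abs_mul, abs_of_pos hkR] at h7
        linarith
      have hsinku : 1/2 ≤ |Real.sin ((k:ℝ)*((θ+θt)/2))| := by
        have e3 : (k:ℝ)*((θ+θt)/2) = (k:ℝ)*θt + (k:ℝ)*v := by rw [hvdef]; ring
        rw [e3, Real.sin_add, hcoskθt]
        have e4 : Real.sin ((k:ℝ)*θt) * Real.cos ((k:ℝ)*v) + 0 * Real.sin ((k:ℝ)*v) =
            Real.sin ((k:ℝ)*θt) * Real.cos ((k:ℝ)*v) := by ring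
        rw [e4, abs_mul, hsinkθt, one_mul]
        have h8 : Real.cos ((k:ℝ)*v) = Real.cos (|(k:ℝ)*v|) := (Real.cos_abs _).symm
        have h9 : Real.cos (π/4) ≤ Real.cos (|(k:ℝ)*v|) :=
          Real.cos_le_cos_of_nonneg_of_le_pi (abs_nonneg _) (by linarith) hkv
        have h10 : (1:ℝ)/2 ≤ Real.cos (π/4) := by
          rw [Real.cos_pi_div_four]
          have h21 : (1:ℝ) ≤ Real.sqrt 2 := by
            rw [show (1:ℝ) = Real.sqrt 1 by simp]
            exact Real.sqrt_le_sqrt (by norm_num)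
          linarith only [h21]
        calc (1:ℝ)/2 ≤ Real.cos (π/4) := h10
          _ ≤ Real.cos (|(k:ℝ)*v|) := h9
          _ = Real.cos ((k:ℝ)*v) := by rw [← h8]
          _ ≤ |Real.cos ((k:ℝ)*v)| := le_abs_self _
      have hsu0pos : 0 < Real.sin ((θ+θt)/2) :=
        Real.sin_pos_of_pos_of_lt_pi (by linarith) (by linarith)
      have hsu0le : Real.sin ((θ+θt)/2) ≤ 2*s := by
        have h11 := s11_sin_lip ((θ+θt)/2) θt
        have h12 : |(θ+θt)/2 - θt| = |v| := by
          rw [hvdef]; congr 1; ring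
        rw [h12] at h11
        have h13 := le_abs_self (Real.sin ((θ+θt)/2) - Real.sin θt)
        have : Real.sin ((θ+θt)/2) ≤ s + |v| := by rw [hsdef]; linarith
        linarith
      have hsvle : |Real.sin v| ≤ |v| := Real.abs_sin_le_abs
      have h1' := key2 θ
      rw [hcosθ, ← hvdef] at h1'
      have habs : |S.eval y| * (Real.sin ((θ+θt)/2) * |Real.sin v|) =
          |Real.sin ((k:ℝ)*((θ+θt)/2))| * |Real.sin ((k:ℝ)*v)| := by
        conv_lhs => rw [← abs_of_pos hsu0pos]
        rw [← abs_mul, ← abs_mul, h1', abs_mul]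
      have hv0 : 0 < |v| := abs_pos.mpr hvne
      have h15 : (1/2) * ((k:ℝ)*|v|/2) ≤
          |Real.sin ((k:ℝ)*((θ+θt)/2))| * |Real.sin ((k:ℝ)*v)| := by
        apply mul_le_mul hsinku hsinkv (by positivity) (abs_nonneg _)
      have h16 : |S.eval y| * (Real.sin ((θ+θt)/2) * |Real.sin v|) ≤
          |S.eval y| * (2*s*|v|) := by
        apply mul_le_mul_of_nonneg_left _ (abs_nonneg _)
        apply mul_le_mul hsu0le hsvle (abs_nonneg _) (by linarith)
      have h14 : (k:ℝ) * |v| ≤ |S.eval y| * (8*s) * |v| := by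
        linarith only [habs, h15, h16]
      exact le_of_mul_le_mul_right h14 hv0
  have hSyne : S.eval y ≠ 0 := by
    intro h; rw [h, abs_zero, zero_mul] at hSy; linarith
  have hSypos : 0 < |S.eval y| := abs_pos.mpr hSyne
  have hlip : |Real.sin θ - s| ≤ π/(2*(k:ℝ)) := by
    have := s11_sin_lip θ θt
    rw [← hsdef] at this
    exact le_trans this hδ
  have hπ2k1 : π/(2*(k:ℝ)) ≤ 2*(1/(k:ℝ)) := by
    have e : 2*(1/(k:ℝ)) - π/(2*(k:ℝ)) = (4-π)/(2*(k:ℝ)) := by field_simp; ring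
    have h2 : (0:ℝ) ≤ (4-π)/(2*(k:ℝ)) := div_nonneg (by linarith) (by positivity)
    linarith
  have hab1 := le_abs_self (Real.sin θ - s)
  have hab2 := le_abs_self (s - Real.sin θ)
  rw [abs_sub_comm] at hab2
  have hρ4 : ρ * (k:ℝ) ≤ 4*s := by
    rw [hρ']
    have e : (((k:ℝ)*k)⁻¹ + (k:ℝ)⁻¹ * Real.sin θ) * k = 1/(k:ℝ) + Real.sin θ := by
      field_simp
    rw [e]
    linarith
  have hρ2 : s ≤ 2 * (ρ * (k:ℝ)) := by
    rw [hρ']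
    have e : (((k:ℝ)*k)⁻¹ + (k:ℝ)⁻¹ * Real.sin θ) * k = 1/(k:ℝ) + Real.sin θ := by
      field_simp
    rw [e]
    linarith
  have hρpos : 0 < ρ := by
    rw [hρdef]
    have : (0:ℝ) ≤ Real.sqrt (1 - y^2) := Real.sqrt_nonneg _
    positivity
  have hxty : |xt - y| * (k:ℝ) ≤ 4*s := by
    have e : xt - y = -(2 * Real.sin ((θt+θ)/2) * Real.sin ((θt-θ)/2)) := by
      rw [hxtdef, ← hcosθ, Real.cos_sub_cos]
      ring
    rw [e]
    have h17 : |Real.sin ((θt+θ)/2)| ≤ 2*s := by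
      have h11 := s11_sin_lip ((θt+θ)/2) θt
      have h12 : |(θt+θ)/2 - θt| = |θ - θt|/2 := by
        rw [show (θt+θ)/2 - θt = (θ-θt)/2 by ring, abs_div]; norm_num
      rw [h12, ← hsdef] at h11
      have h18 := abs_sub_abs_le_abs_sub (Real.sin ((θt+θ)/2)) (Real.sin θt)
      rw [← hsdef, abs_of_pos hs0] at h18
      have h19 : |θ - θt|/2 ≤ π/(4*(k:ℝ)) := by
        have e2 : π/(4*(k:ℝ)) = (π/(2*(k:ℝ)))/2 := by ring
        rw [e2]; linarith [hδ]
      linarith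
    have h19 : |Real.sin ((θt-θ)/2)| ≤ π/(4*(k:ℝ)) := by
      calc |Real.sin ((θt-θ)/2)| ≤ |(θt-θ)/2| := Real.abs_sin_le_abs
        _ = |θ - θt|/2 := by
            rw [abs_div, abs_sub_comm]; norm_num
        _ ≤ π/(4*(k:ℝ)) := by
            have e2 : π/(4*(k:ℝ)) = (π/(2*(k:ℝ)))/2 := by ring
            rw [e2]; linarith [hδ]
    have e3 : |(-(2 * Real.sin ((θt+θ)/2) * Real.sin ((θt-θ)/2)))| =
        2 * |Real.sin ((θt+θ)/2)| * |Real.sin ((θt-θ)/2)| := by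
      rw [abs_neg, abs_mul, abs_mul, abs_two]
    rw [e3]
    have h20 : 2 * |Real.sin ((θt+θ)/2)| * |Real.sin ((θt-θ)/2)| ≤ 2 * (2*s) * (π/(4*(k:ℝ))) := by
      apply mul_le_mul _ h19 (abs_nonneg _) (by positivity)
      apply mul_le_mul_of_nonneg_left h17 (by norm_num)
    have e4 : 2 * (2*s) * (π/(4*(k:ℝ))) * (k:ℝ) = π * s := by field_simp; ring
    linarith only [mul_le_mul_of_nonneg_right h20 hkR.le, e4,
      mul_nonneg (by linarith : (0:ℝ) ≤ 4 - π) hs0.le]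
  refine ⟨Polynomial.C (S.eval y)⁻¹ * S, ?_, ?_, ?_⟩
  · have hSne : S ≠ 0 := fun h => hSyne (by rw [h]; simp)
    have hTdeg := s11_natDegree_T_le k
    have hmul : (Polynomial.Chebyshev.T ℝ (k:ℕ)).natDegree = 1 + S.natDegree := by
      rw [hS, Polynomial.natDegree_mul (Polynomial.X_sub_C_ne_zero xt) hSne,
        Polynomial.natDegree_X_sub_C]
    rw [Polynomial.natDegree_C_mul (inv_ne_zero hSyne)]
    omega
  · simp only [Polynomial.eval_mul, Polynomial.eval_C]
    exact inv_mul_cancel₀ hSyne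
  · intro x hx
    obtain ⟨hx1, hx2⟩ := hx
    set φ := Real.arccos x with hφdef
    have hφ0 : 0 ≤ φ := Real.arccos_nonneg x
    have hφπ : φ ≤ π := Real.arccos_le_pi x
    have hcosφ : Real.cos φ = x := Real.cos_arccos hx1 hx2
    have hb2 := B2 φ hφ0 hφπ
    have hb1 := B1 φ
    rw [hcosφ] at hb1 hb2
    have p1 : |S.eval x| * ρ ≤ 8 := by
      have q1 : |S.eval x| * ρ * (k:ℝ) ≤ 8 * (k:ℝ) := by
        linarith only [hb2, mul_le_mul_of_nonneg_left hρ4 (abs_nonneg (S.eval x))]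
      exact le_of_mul_le_mul_right q1 hkR
    have p2 : |S.eval x| * |x - y| ≤ 9 := by
      have q2 : |x - y| ≤ |x - xt| + |xt - y| := by
        calc |x - y| = |(x - xt) + (xt - y)| := by ring_nf
          _ ≤ |x - xt| + |xt - y| := abs_add_le _ _
      have q3 : |S.eval x| * |xt - y| ≤ 8 := by
        have q5 := mul_le_mul hb2 hxty (by positivity) (by positivity)
        have q4 : |S.eval x| * |xt - y| * (s * (k:ℝ)) ≤ 8 * (s * (k:ℝ)) := by
          linarith only [q5]
        exact le_of_mul_le_mul_right q4 (by positivity)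
      linarith only [hb1, q3, mul_le_mul_of_nonneg_left q2 (abs_nonneg (S.eval x))]
    have hQ : |(Polynomial.C (S.eval y)⁻¹ * S).eval x| = |S.eval y|⁻¹ * |S.eval x| := by
      simp only [Polynomial.eval_mul, Polynomial.eval_C]
      rw [abs_mul, abs_inv]
    rw [hQ]
    have final : |S.eval x| * (ρ + |x - y|) ≤ 512 * ρ * |S.eval y| := by
      have r1 : |S.eval x| * (ρ + |x - y|) ≤ 17 := by linarith only [p1, p2]
      have r5 := mul_le_mul hρ2 hSy (by positivity) (by positivity)
      have r4 : 1 * (s * (k:ℝ)) ≤ (16 * (ρ * |S.eval y|)) * (s * (k:ℝ)) := by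
        linarith only [r5]
      have r6 : (1:ℝ) ≤ 16 * (ρ * |S.eval y|) :=
        le_of_mul_le_mul_right r4 (by positivity)
      linarith only [r1, r6]
    have e5 : |S.eval y|⁻¹ * |S.eval x| * (ρ + |x - y|) =
        (|S.eval x| * (ρ + |x - y|)) / |S.eval y| := by
      field_simp
    rw [e5, div_le_iff₀ hSypos]
    calc |S.eval x| * (ρ + |x - y|) ≤ 512 * ρ * |S.eval y| := final
      _ = 512 * ρ * |S.eval y| := rfl



/-- With `ρ_n(x) = n^{-2} + n^{-1}√(1-x²)`, for every `m ≥ 1` there exists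
`c₁ > 0` (depending only on `m`) such that for all `n ≥ 1` and `y ∈ [-1,1]` there is a real
polynomial `P` of degree `≤ n` with `P(y) = 1` and
`|P(x)| ≤ c₁ (ρ_n(y)/(ρ_n(y)+|x-y|))^m` for all `x ∈ [-1,1]`. -/
theorem stmt11 (m : ℕ) (hm : 1 ≤ m) :
    ∃ c₁ : ℝ, 0 < c₁ ∧ ∀ n : ℕ, 1 ≤ n → ∀ y ∈ Set.Icc (-1 : ℝ) 1,
      ∃ P : Polynomial ℝ, P.natDegree ≤ n ∧ P.eval y = 1 ∧
        ∀ x ∈ Set.Icc (-1 : ℝ) 1,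
          |P.eval x| ≤ c₁ *
            ((((n : ℝ) ^ 2)⁻¹ + (n : ℝ)⁻¹ * Real.sqrt (1 - y ^ 2)) /
              ((((n : ℝ) ^ 2)⁻¹ + (n : ℝ)⁻¹ * Real.sqrt (1 - y ^ 2)) + |x - y|)) ^ m := by
  have hmR : (1:ℝ) ≤ m := by exact_mod_cast hm
  refine ⟨(2048 * (m:ℝ)^2)^m, by positivity, ?_⟩
  intro n hn y hy
  set k := n / m + 1 with hkdef
  have hk1 : 1 ≤ k := Nat.succ_le_succ (Nat.zero_le _)
  obtain ⟨Q, hdeg, hevalQ, hbound⟩ := s11_core k hk1 y hy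
  refine ⟨Q ^ m, ?_, ?_, ?_⟩
  · calc (Q^m).natDegree = m * Q.natDegree := Polynomial.natDegree_pow Q m
      _ ≤ m * (n/m) := Nat.mul_le_mul_left m (by omega)
      _ = (n/m) * m := Nat.mul_comm _ _
      _ ≤ n := Nat.div_mul_le_self n m
  · rw [Polynomial.eval_pow, hevalQ, one_pow]
  · intro x hx
    have hb := hbound x hx
    set ρn := (((n:ℝ)^2)⁻¹ + (n:ℝ)⁻¹ * Real.sqrt (1-y^2)) with hρn
    set ρk := (((k:ℝ)^2)⁻¹ + (k:ℝ)⁻¹ * Real.sqrt (1-y^2)) with hρk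
    have hnR : (0:ℝ) < n := by exact_mod_cast hn
    have hkR : (0:ℝ) < k := by positivity
    have hsq : (0:ℝ) ≤ Real.sqrt (1-y^2) := Real.sqrt_nonneg _
    have hρnpos : 0 < ρn := by rw [hρn]; positivity
    have hρkpos : 0 < ρk := by rw [hρk]; positivity
    have hknN : k ≤ 2*n := by
      have hdiv : n/m ≤ n := Nat.div_le_self n m
      omega
    have hkn : (k:ℝ) ≤ 2*n := by exact_mod_cast hknN
    have hnkN : n < k*m := by
      have h1 := Nat.div_add_mod n m
      have h2 := Nat.mod_lt n (show 0 < m by omega)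
      have : k*m = m*(n/m) + m := by rw [hkdef]; ring
      omega
    have hnk : (n:ℝ) < (k:ℝ)*m := by exact_mod_cast hnkN
    have hk_inv : (k:ℝ)⁻¹ ≤ (m:ℝ) * (n:ℝ)⁻¹ := by
      rw [inv_eq_one_div, show (m:ℝ)*(n:ℝ)⁻¹ = m/n by ring, div_le_div_iff₀ hkR hnR]
      linarith
    have hρkm : ρk ≤ (m:ℝ)^2 * ρn := by
      rw [hρk, hρn]
      have h1 : ((k:ℝ)^2)⁻¹ ≤ (m:ℝ)^2 * ((n:ℝ)^2)⁻¹ := by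
        calc ((k:ℝ)^2)⁻¹ = (k:ℝ)⁻¹*(k:ℝ)⁻¹ := by rw [sq, mul_inv]
          _ ≤ ((m:ℝ)*(n:ℝ)⁻¹)*((m:ℝ)*(n:ℝ)⁻¹) :=
              mul_le_mul hk_inv hk_inv (by positivity) (by positivity)
          _ = (m:ℝ)^2 * ((n:ℝ)^2)⁻¹ := by rw [sq, sq, mul_inv]; ring
      have h2 : (k:ℝ)⁻¹ * Real.sqrt (1-y^2) ≤ (m:ℝ)^2 * ((n:ℝ)⁻¹ * Real.sqrt (1-y^2)) := by
        have h3 := mul_le_mul_of_nonneg_right hk_inv hsq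
        have hm2 : (m:ℝ) ≤ (m:ℝ)^2 := by nlinarith
        have h4 : (m:ℝ)*((n:ℝ)⁻¹*Real.sqrt (1-y^2)) ≤ (m:ℝ)^2*((n:ℝ)⁻¹*Real.sqrt (1-y^2)) :=
          mul_le_mul_of_nonneg_right hm2 (by positivity)
        calc (k:ℝ)⁻¹ * Real.sqrt (1-y^2) ≤ (m:ℝ)*(n:ℝ)⁻¹*Real.sqrt (1-y^2) := h3
          _ = (m:ℝ)*((n:ℝ)⁻¹*Real.sqrt (1-y^2)) := by ring
          _ ≤ (m:ℝ)^2*((n:ℝ)⁻¹*Real.sqrt (1-y^2)) := h4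
      linarith
    have hρnk : ρn ≤ 4 * ρk := by
      rw [hρk, hρn]
      have h1 : (n:ℝ)⁻¹ ≤ 2*(k:ℝ)⁻¹ := by
        rw [inv_eq_one_div, show 2*(k:ℝ)⁻¹ = 2/k by ring, div_le_div_iff₀ hnR hkR]
        linarith
      have h2 : ((n:ℝ)^2)⁻¹ ≤ 4*((k:ℝ)^2)⁻¹ := by
        rw [inv_eq_one_div, show 4*((k:ℝ)^2)⁻¹ = 4/(k:ℝ)^2 by ring,
          div_le_div_iff₀ (by positivity) (by positivity)]
        nlinarith
      have h3 := mul_le_mul_of_nonneg_right h1 hsq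
      have h4 : (0:ℝ) ≤ (k:ℝ)⁻¹ * Real.sqrt (1-y^2) := by positivity
      linarith
    have ht : 0 ≤ |x - y| := abs_nonneg _
    have hQle : |Q.eval x| ≤ 2048 * (m:ℝ)^2 * (ρn / (ρn + |x-y|)) := by
      have h3 : |Q.eval x| ≤ 512 * ρk / (ρk + |x-y|) := by
        rw [le_div_iff₀ (by positivity)]
        exact hb
      have h4 : 512 * ρk / (ρk + |x-y|) ≤ 2048 * ((m:ℝ)^2) * ρn / (ρn + |x-y|) := by
        rw [div_le_div_iff₀ (by positivity) (by positivity)]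
        have h5 : ρn + |x-y| ≤ 4*(ρk + |x-y|) := by linarith
        have h6 := mul_le_mul hρkm h5 (by positivity) (by positivity)
        nlinarith [h6]
      calc |Q.eval x| ≤ 512*ρk/(ρk+|x-y|) := h3
        _ ≤ 2048*((m:ℝ)^2)*ρn/(ρn+|x-y|) := h4
        _ = 2048*(m:ℝ)^2*(ρn/(ρn+|x-y|)) := by ring
    rw [Polynomial.eval_pow, abs_pow]
    calc |Q.eval x|^m ≤ (2048*(m:ℝ)^2*(ρn/(ρn+|x-y|)))^m :=
          pow_le_pow_left₀ (abs_nonneg _) hQle m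
      _ = (2048*(m:ℝ)^2)^m * (ρn/(ρn+|x-y|))^m := mul_pow _ _ m
end

section
/- Let 1 < p ≤ 2, d ≥ 2, and let x ∈ ℝ^d with ‖x‖_p = 1 and all coordinates nonnegative. Let u = γ·(x₁^{p−1},…,x_d^{p−1}) with γ = (Σ_j x_j^{2(p−1)})^{−1/2} be the outward unit normal to the l_p sphere at x, and let v be any unit vector orthogonal to u. Then there exist β = β(d) > 0 and α = α(d,p) > 0 such that for every δ ∈ (0, α), the point x − δu + β·δ^{1/p}·v lies in the l_p unit ball B_p^d = {z : Σ|z_j|^p ≤ 1}. -/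
open Real

private lemma rp_subadd {q : ℝ} (hq0 : 0 ≤ q) (hq1 : q ≤ 1) {s t : ℝ} (hs : 0 ≤ s) (ht : 0 ≤ t) :
    (s + t) ^ q ≤ s ^ q + t ^ q := by
  have h := NNReal.rpow_add_le_add_rpow (Real.toNNReal s) (Real.toNNReal t) hq0 hq1
  have h2 := (NNReal.coe_le_coe).2 h
  push_cast at h2
  rwa [Real.coe_toNNReal s hs, Real.coe_toNNReal t ht] at h2

private lemma rp_succ {p t : ℝ} (hp : 1 < p) (ht : 0 ≤ t) : t ^ (p - 1) * t = t ^ p := by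
  rcases eq_or_lt_of_le ht with h | h
  · rw [← h, Real.zero_rpow (sub_ne_zero.2 hp.ne'), Real.zero_rpow (by positivity : p ≠ 0), zero_mul]
  · have h1 := Real.rpow_add_one h.ne' (p - 1)
    rw [show p - 1 + 1 = p from by ring] at h1
    exact h1.symm

private lemma rp_grad {p : ℝ} (hp : 1 < p) (u w : ℝ) (hu : 0 ≤ u) (hw : 0 ≤ w) :
    w ^ p + p * w ^ (p - 1) * (u - w) ≤ u ^ p := by
  rcases eq_or_lt_of_le hw with h | h
  · rw [← h, Real.zero_rpow (by positivity : p ≠ 0), Real.zero_rpow (sub_ne_zero.2 hp.ne')]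
    simpa using Real.rpow_nonneg hu p
  · have hs : -1 ≤ u / w - 1 := by
      have : 0 ≤ u / w := div_nonneg hu h.le
      linarith
    have hB := one_add_mul_self_le_rpow_one_add hs hp.le
    rw [show 1 + (u / w - 1) = u / w from by ring, Real.div_rpow hu h.le] at hB
    have hwp : 0 < w ^ p := Real.rpow_pos_of_pos h p
    have h2 : (1 + p * (u / w - 1)) * w ^ p ≤ u ^ p := (le_div_iff₀ hwp).1 hB
    have hww : w ^ p = w ^ (p - 1) * w := (rp_succ hp h.le).symm
    have hw0 : w ≠ 0 := h.ne'
    calc w ^ p + p * w ^ (p - 1) * (u - w)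
        = (1 + p * (u / w - 1)) * w ^ p := by rw [hww]; field_simp
      _ ≤ u ^ p := h2

private lemma rp_key {p : ℝ} (hp1 : 1 < p) (hp2 : p ≤ 2) {a : ℝ} (ha : 0 ≤ a) (b : ℝ) :
    |a + b| ^ p ≤ a ^ p + p * (a ^ (p - 1) * b) + 3 * |b| ^ p := by
  have hp0 : (0:ℝ) < p := by linarith
  have hq0 : (0:ℝ) ≤ p - 1 := by linarith
  have hq1 : p - 1 ≤ 1 := by linarith
  rcases le_or_gt 0 (a + b) with hab | hab
  · rcases le_or_gt 0 b with hb | hb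
    · rw [abs_of_nonneg hab, abs_of_nonneg hb]
      have h1 := rp_grad hp1 a (a + b) ha hab
      have h2 : (a + b) ^ (p - 1) ≤ a ^ (p - 1) + b ^ (p - 1) := rp_subadd hq0 hq1 ha hb
      have h3 : b ^ (p - 1) * b = b ^ p := rp_succ hp1 hb
      have h4 : p * ((a + b) ^ (p - 1) * b) ≤ p * ((a ^ (p - 1) + b ^ (p - 1)) * b) :=
        mul_le_mul_of_nonneg_left (mul_le_mul_of_nonneg_right h2 hb) hp0.le
      nlinarith [Real.rpow_nonneg hb p]
    · rw [abs_of_nonneg hab, abs_of_neg hb]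
      have h1 := rp_grad hp1 a (a + b) ha hab
      have h2 : a ^ (p - 1) ≤ (a + b) ^ (p - 1) + (-b) ^ (p - 1) := by
        have h := rp_subadd hq0 hq1 hab (neg_nonneg.2 hb.le)
        rwa [show a + b + -b = a from by ring] at h
      have h3 : (-b) ^ (p - 1) * (-b) = (-b) ^ p := rp_succ hp1 (by linarith)
      have h4 : p * (a ^ (p - 1) * (-b)) ≤ p * (((a + b) ^ (p - 1) + (-b) ^ (p - 1)) * (-b)) :=
        mul_le_mul_of_nonneg_left (mul_le_mul_of_nonneg_right h2 (by linarith)) hp0.le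
      nlinarith [Real.rpow_nonneg (show (0:ℝ) ≤ -b from by linarith) p]
  · have hb : b < 0 := by linarith
    rw [abs_of_neg hab, abs_of_neg hb]
    have hba : a ≤ -b := by linarith
    have h2 : (-(a + b)) ^ p ≤ (-b) ^ p := Real.rpow_le_rpow (by linarith) (by linarith) hp0.le
    have h3 : a ^ (p - 1) ≤ (-b) ^ (p - 1) := Real.rpow_le_rpow ha hba hq0
    have h4 : (-b) ^ (p - 1) * (-b) = (-b) ^ p := rp_succ hp1 (by linarith)
    have h5 : a ^ (p - 1) * (-b) ≤ (-b) ^ (p - 1) * (-b) :=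
      mul_le_mul_of_nonneg_right h3 (by linarith)
    nlinarith [Real.rpow_nonneg ha p,
      Real.rpow_nonneg (show (0:ℝ) ≤ -b from by linarith) p,
      mul_le_mul_of_nonneg_left h5 hp0.le]

private lemma rp_twopow {p s t : ℝ} (hp1 : 1 ≤ p) (hp2 : p ≤ 2) (hs : 0 ≤ s) (ht : 0 ≤ t) :
    (s + t) ^ p ≤ 4 * (s ^ p + t ^ p) := by
  have h2p : (2:ℝ) ^ p ≤ 4 := by
    calc (2:ℝ) ^ p ≤ (2:ℝ) ^ (2:ℝ) := Real.rpow_le_rpow_of_exponent_le one_le_two hp2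
      _ = 4 := by rw [Real.rpow_two]; norm_num
  rcases le_total s t with h | h
  · calc (s + t) ^ p ≤ (2 * t) ^ p := Real.rpow_le_rpow (by linarith) (by linarith) (by linarith)
      _ = 2 ^ p * t ^ p := Real.mul_rpow (by norm_num) ht
      _ ≤ 4 * t ^ p := mul_le_mul_of_nonneg_right h2p (Real.rpow_nonneg ht p)
      _ ≤ 4 * (s ^ p + t ^ p) := by nlinarith [Real.rpow_nonneg hs p]
  · calc (s + t) ^ p ≤ (2 * s) ^ p := Real.rpow_le_rpow (by linarith) (by linarith) (by linarith)
      _ = 2 ^ p * s ^ p := Real.mul_rpow (by norm_num) hs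
      _ ≤ 4 * s ^ p := mul_le_mul_of_nonneg_right h2p (Real.rpow_nonneg hs p)
      _ ≤ 4 * (s ^ p + t ^ p) := by nlinarith [Real.rpow_nonneg ht p]

/-- For `1 < p ≤ 2`, `d ≥ 2`, a point `x` on the positive part of the unit
`l_p` sphere with outward unit normal `u = γ(x₁^{p-1},…,x_d^{p-1})`,
`γ = (∑ x_j^{2(p-1)})^{-1/2}`, and any unit vector `v ⟂ u`, there exist `β = β(d) > 0` and
`α = α(d,p) > 0` such that for all `δ ∈ (0,α)` the point `x - δu + βδ^{1/p}v` lies in the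
`l_p` unit ball. -/
theorem stmt13 (d : ℕ) (hd : 2 ≤ d) :
    ∃ β : ℝ, 0 < β ∧ ∀ p : ℝ, 1 < p → p ≤ 2 →
      ∃ α : ℝ, 0 < α ∧ ∀ x v : Fin d → ℝ,
        (∀ j, 0 ≤ x j) → (∑ j, (x j) ^ p = 1) →
        (∑ j, (v j) ^ 2 = 1) → (∑ j, (x j) ^ (p - 1) * v j = 0) →
        ∀ δ : ℝ, 0 < δ → δ < α →
          ∑ j, |x j - δ * ((∑ i, (x i) ^ (2 * (p - 1))) ^ (-(1 : ℝ) / 2) * (x j) ^ (p - 1))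
                + β * δ ^ (1 / p) * v j| ^ p ≤ 1 := by
  have hd0 : (0:ℝ) < (d:ℝ) := by exact_mod_cast Nat.lt_of_lt_of_le Nat.zero_lt_two hd
  have hd1 : (1:ℝ) ≤ (d:ℝ) := by exact_mod_cast Nat.one_le_of_lt (Nat.lt_of_lt_of_le Nat.one_lt_two hd)
  have hdne : (d:ℝ) ≠ 0 := hd0.ne'
  refine ⟨(52 * (d:ℝ)^2)⁻¹, by positivity, ?_⟩
  intro p hp1 hp2
  have hp0 : (0:ℝ) < p := by linarith
  have hq0 : (0:ℝ) ≤ p - 1 := by linarith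
  have hq1 : p - 1 ≤ 1 := by linarith
  refine ⟨(52 * (d:ℝ)^4) ^ (-(1/(p-1))), Real.rpow_pos_of_pos (by positivity) _, ?_⟩
  intro x v hx hxs hv hov δ hδ0 hδα
  haveI : Nonempty (Fin d) := ⟨⟨0, by omega⟩⟩
  set β : ℝ := (52 * (d:ℝ)^2)⁻¹ with hβdef
  set α : ℝ := (52 * (d:ℝ)^4) ^ (-(1/(p-1))) with hαdef
  have hβ0 : 0 < β := by rw [hβdef]; positivity
  have hβ1 : β ≤ 1 := by
    rw [hβdef]
    have h1 : (1:ℝ) ≤ 52 * (d:ℝ)^2 := by nlinarith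
    exact inv_le_one_of_one_le₀ h1
  set S : ℝ := ∑ i, (x i) ^ (2 * (p - 1)) with hSdef
  set γ : ℝ := S ^ (-(1 : ℝ) / 2) with hγdef
  set T : ℝ := S ^ ((1 : ℝ) / 2) with hTdef
  clear_value β α S γ T
  -- basic coordinate bounds
  have hx1 : ∀ j, x j ≤ 1 := by
    intro j
    by_contra h
    push_neg at h
    have h1 : (1:ℝ) < x j ^ p :=
      (Real.one_lt_rpow_iff_of_pos (lt_trans one_pos h)).2 (Or.inl ⟨h, hp0⟩)
    have h2 : x j ^ p ≤ 1 := by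
      rw [← hxs]
      exact Finset.single_le_sum (fun i _ => Real.rpow_nonneg (hx i) p) (Finset.mem_univ j)
    linarith
  have hv1 : ∀ j, |v j| ≤ 1 := by
    intro j
    have h2 : v j ^ 2 ≤ 1 := by
      rw [← hv]
      exact Finset.single_le_sum (fun i _ => sq_nonneg (v i)) (Finset.mem_univ j)
    nlinarith [abs_nonneg (v j), sq_abs (v j)]
  -- lower bound for S
  have hS2 : ((d:ℝ)^2)⁻¹ ≤ S := by
    have hsum1 : ∑ _j : Fin d, (1/(d:ℝ)) = 1 := by
      rw [Finset.sum_const, Finset.card_univ, Fintype.card_fin, nsmul_eq_mul]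
      field_simp
    obtain ⟨j0, -, hj0⟩ := Finset.exists_le_of_sum_le
      (Finset.univ_nonempty (α := Fin d)) (le_of_eq (hsum1.trans hxs.symm))
    have hxj0 : 0 < x j0 := by
      by_contra h
      push_neg at h
      have : x j0 = 0 := le_antisymm h (hx j0)
      rw [this, Real.zero_rpow hp0.ne'] at hj0
      have : (0:ℝ) < 1 / (d:ℝ) := by positivity
      linarith
    have h1 : x j0 ^ (2 * p) ≤ x j0 ^ (2 * (p - 1)) :=
      Real.rpow_le_rpow_of_exponent_ge hxj0 (hx1 j0) (by linarith)
    have h2 : x j0 ^ (2 * p) = (x j0 ^ p) ^ 2 := by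
      rw [mul_comm, Real.rpow_mul (hx j0), Real.rpow_two]
    have h3 : ((d:ℝ)^2)⁻¹ ≤ (x j0 ^ p) ^ 2 := by
      have h4 : (1/(d:ℝ))^2 ≤ (x j0 ^ p)^2 := pow_le_pow_left₀ (by positivity) hj0 2
      calc ((d:ℝ)^2)⁻¹ = (1/(d:ℝ))^2 := by rw [div_pow, one_pow, inv_eq_one_div]
        _ ≤ (x j0 ^ p)^2 := h4
    have h5 : x j0 ^ (2 * (p - 1)) ≤ S := by
      rw [hSdef]
      exact Finset.single_le_sum (fun i _ => Real.rpow_nonneg (hx i) _) (Finset.mem_univ j0)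
    linarith [h2 ▸ h1]
  have hSpos : 0 < S := lt_of_lt_of_le (by positivity) hS2
  have hTpos : 0 < T := hTdef ▸ Real.rpow_pos_of_pos hSpos ((1:ℝ)/2)
  have hγT : γ = T⁻¹ := by
    rw [hγdef, hTdef, show (-(1:ℝ)/2) = -((1:ℝ)/2) from by ring, Real.rpow_neg hSpos.le]
  have hγ0 : 0 ≤ γ := by rw [hγT]; positivity
  have hinvd : (d:ℝ)⁻¹ ≤ T := by
    have h2 := Real.rpow_le_rpow (by positivity) hS2 (by norm_num : (0:ℝ) ≤ 1/2)
    have h3 : (((d:ℝ)^2)⁻¹) ^ ((1:ℝ)/2) = (d:ℝ)⁻¹ := by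
      rw [Real.inv_rpow (by positivity), ← Real.rpow_natCast (d:ℝ) 2,
        ← Real.rpow_mul (Nat.cast_nonneg d)]
      norm_num
    rw [hTdef]
    linarith [h3 ▸ h2]
  have hγd : γ ≤ (d:ℝ) := by
    rw [hγT]
    calc T⁻¹ ≤ ((d:ℝ)⁻¹)⁻¹ := inv_anti₀ (by positivity) hinvd
      _ = (d:ℝ) := inv_inv _
  have hdT : 1 ≤ (d:ℝ) * T := by
    have := mul_le_mul_of_nonneg_left hinvd hd0.le
    rwa [mul_inv_cancel₀ hdne] at this
  have hγS : γ * S = T := by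
    have hTT : T * T = S := by
      rw [hTdef, ← Real.rpow_add hSpos]
      norm_num
    rw [hγT, ← hTT, inv_mul_cancel_left₀ hTpos.ne']
  -- the perturbation
  set b : Fin d → ℝ := fun j => β * δ ^ (1/p) * v j - δ * (γ * x j ^ (p-1)) with hbdef
  clear_value b
  have hgoal : ∀ j, x j - δ * (γ * x j ^ (p-1)) + β * δ ^ (1/p) * v j = x j + b j := by
    intro j; rw [hbdef]; ring
  have hxx : ∀ j, x j ^ (p-1) * x j ^ (p-1) = x j ^ (2*(p-1)) := by
    intro j
    rw [show 2*(p-1) = (p-1) + (p-1) from by ring,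
      Real.rpow_add' (hx j) (by intro h; apply hp1.ne'; linarith)]
  -- middle term
  have hmid : ∑ j, x j ^ (p-1) * b j = -(δ * T) := by
    have hterm : ∀ j, x j ^ (p-1) * b j
        = β * δ ^ (1/p) * (x j ^ (p-1) * v j) - δ * γ * (x j ^ (2*(p-1))) := by
      intro j
      rw [← hxx j, hbdef]
      ring
    rw [Finset.sum_congr rfl (fun j _ => hterm j), Finset.sum_sub_distrib,
      ← Finset.mul_sum, ← Finset.mul_sum, hov, mul_zero, zero_sub, ← hSdef,
      mul_assoc, hγS]
  -- per-coordinate bound on |b j|^p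
  have hbound : ∀ j, |b j| ^ p ≤ 2 * δ / (13 * (d:ℝ)^2) := by
    intro j
    have hs0 : 0 ≤ δ * (γ * x j ^ (p-1)) :=
      mul_nonneg hδ0.le (mul_nonneg hγ0 (Real.rpow_nonneg (hx j) _))
    have ht0 : 0 ≤ β * δ ^ (1/p) * |v j| :=
      mul_nonneg (mul_nonneg hβ0.le (Real.rpow_nonneg hδ0.le _)) (abs_nonneg _)
    have habs : |b j| ≤ δ * (γ * x j ^ (p-1)) + β * δ ^ (1/p) * |v j| := by
      rw [hbdef]
      calc |β * δ ^ (1/p) * v j - δ * (γ * x j ^ (p-1))|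
          ≤ |β * δ ^ (1/p) * v j| + |δ * (γ * x j ^ (p-1))| := abs_sub _ _
        _ = δ * (γ * x j ^ (p-1)) + β * δ ^ (1/p) * |v j| := by
            rw [abs_mul, abs_of_nonneg (mul_nonneg hβ0.le (Real.rpow_nonneg hδ0.le (1/p))),
              abs_of_nonneg hs0]
            ring
    have h1 : |b j| ^ p ≤ (δ * (γ * x j ^ (p-1)) + β * δ ^ (1/p) * |v j|) ^ p :=
      Real.rpow_le_rpow (abs_nonneg _) habs hp0.le
    have h2 := rp_twopow hp1.le hp2 hs0 ht0
    -- bound for the first piece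
    have hsp : (δ * (γ * x j ^ (p-1))) ^ p ≤ δ / (52 * (d:ℝ)^2) := by
      rw [Real.mul_rpow hδ0.le (mul_nonneg hγ0 (Real.rpow_nonneg (hx j) _)),
        Real.mul_rpow hγ0 (Real.rpow_nonneg (hx j) _)]
      have hδp : δ ^ p ≤ (52 * (d:ℝ)^4)⁻¹ * δ := by
        have e1 : δ ^ p = δ ^ (p-1) * δ := (rp_succ hp1 hδ0.le).symm
        have e2 : δ ^ (p-1) ≤ α ^ (p-1) := Real.rpow_le_rpow hδ0.le hδα.le hq0
        have e3 : α ^ (p-1) = (52 * (d:ℝ)^4)⁻¹ := by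
          rw [hαdef, ← Real.rpow_mul (by positivity : (0:ℝ) ≤ 52 * (d:ℝ)^4),
            show -(1/(p-1)) * (p-1) = -1 by
              rw [neg_mul, one_div, inv_mul_cancel₀ (sub_ne_zero.2 hp1.ne')], Real.rpow_neg_one]
        rw [e1]
        exact mul_le_mul_of_nonneg_right (e3 ▸ e2) hδ0.le
      have hγp : γ ^ p ≤ (d:ℝ)^2 := by
        calc γ ^ p ≤ (d:ℝ) ^ p := Real.rpow_le_rpow hγ0 hγd hp0.le
          _ ≤ (d:ℝ) ^ (2:ℝ) := Real.rpow_le_rpow_of_exponent_le hd1 hp2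
          _ = (d:ℝ)^2 := Real.rpow_two _
      have hxp : (x j ^ (p-1)) ^ p ≤ 1 :=
        Real.rpow_le_one (Real.rpow_nonneg (hx j) _)
          (Real.rpow_le_one (hx j) (hx1 j) hq0) hp0.le
      calc δ ^ p * (γ ^ p * (x j ^ (p-1)) ^ p)
          ≤ ((52 * (d:ℝ)^4)⁻¹ * δ) * ((d:ℝ)^2 * 1) := by
            apply mul_le_mul hδp
              (mul_le_mul hγp hxp (Real.rpow_nonneg (Real.rpow_nonneg (hx j) _) p) (by positivity))
              (mul_nonneg (Real.rpow_nonneg hγ0 p) (Real.rpow_nonneg (Real.rpow_nonneg (hx j) _) p))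
              (mul_nonneg (by positivity) hδ0.le)
        _ = δ / (52 * (d:ℝ)^2) := by field_simp
    -- bound for the second piece
    have htp : (β * δ ^ (1/p) * |v j|) ^ p ≤ δ / (52 * (d:ℝ)^2) := by
      rw [Real.mul_rpow (mul_nonneg hβ0.le (Real.rpow_nonneg hδ0.le _)) (abs_nonneg _),
        Real.mul_rpow hβ0.le (Real.rpow_nonneg hδ0.le _)]
      have e1 : (δ ^ ((1:ℝ)/p)) ^ p = δ := by
        rw [← Real.rpow_mul hδ0.le, one_div_mul_cancel hp0.ne', Real.rpow_one]
      have e2 : β ^ p ≤ β := by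
        calc β ^ p ≤ β ^ (1:ℝ) := Real.rpow_le_rpow_of_exponent_ge hβ0 hβ1 hp1.le
          _ = β := Real.rpow_one _
      have e3 : |v j| ^ p ≤ 1 := Real.rpow_le_one (abs_nonneg _) (hv1 j) hp0.le
      calc β ^ p * (δ ^ (1/p)) ^ p * |v j| ^ p
          ≤ β * δ * 1 := by
            rw [e1]
            exact mul_le_mul (mul_le_mul_of_nonneg_right e2 hδ0.le) e3
              (Real.rpow_nonneg (abs_nonneg _) p) (mul_nonneg hβ0.le hδ0.le)
        _ = δ / (52 * (d:ℝ)^2) := by rw [hβdef, mul_one]; field_simp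
    calc |b j| ^ p ≤ 4 * ((δ * (γ * x j ^ (p-1))) ^ p + (β * δ ^ (1/p) * |v j|) ^ p) :=
          le_trans h1 h2
      _ ≤ 4 * (δ / (52 * (d:ℝ)^2) + δ / (52 * (d:ℝ)^2)) := by linarith
      _ = 2 * δ / (13 * (d:ℝ)^2) := by field_simp; ring
  -- assemble
  calc ∑ j, |x j - δ * (γ * x j ^ (p-1)) + β * δ ^ (1/p) * v j| ^ p
      = ∑ j, |x j + b j| ^ p := Finset.sum_congr rfl (fun j _ => by rw [hgoal j])
    _ ≤ ∑ j, (x j ^ p + p * (x j ^ (p-1) * b j) + 3 * |b j| ^ p) :=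
        Finset.sum_le_sum (fun j _ => rp_key hp1 hp2 (hx j) (b j))
    _ = 1 + p * (∑ j, x j ^ (p-1) * b j) + 3 * ∑ j, |b j| ^ p := by
        rw [Finset.sum_add_distrib, Finset.sum_add_distrib, hxs,
          ← Finset.mul_sum, ← Finset.mul_sum]
    _ ≤ 1 + p * (-(δ * T)) + 3 * ((d:ℝ) * (2 * δ / (13 * (d:ℝ)^2))) := by
        rw [hmid]
        have hsum := Finset.sum_le_sum (fun j (_ : j ∈ Finset.univ) => hbound j)
        rw [Finset.sum_const, Finset.card_univ, Fintype.card_fin, nsmul_eq_mul] at hsum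
        linarith
    _ ≤ 1 := by
        have h7 : 1 ≤ p * ((d:ℝ) * T) := by nlinarith [hTpos.le]
        have h10 : δ * 1 ≤ δ * (p * ((d:ℝ) * T)) := mul_le_mul_of_nonneg_left h7 hδ0.le
        have h8 : (d:ℝ) * (2 * δ / (13 * (d:ℝ)^2)) = 2 * δ / (13 * (d:ℝ)) := by
          field_simp
        have h13d : (0:ℝ) < 13 * (d:ℝ) := by positivity
        have h9 : 3 * (2 * δ / (13 * (d:ℝ))) ≤ p * (δ * T) := by
          rw [show 3 * (2 * δ / (13 * (d:ℝ))) = 6 * δ / (13 * (d:ℝ)) from by ring,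
            div_le_iff₀ h13d]
          calc 6 * δ ≤ 13 * (δ * 1) := by linarith
            _ ≤ 13 * (δ * (p * ((d:ℝ) * T))) := by linarith
            _ = p * (δ * T) * (13 * (d:ℝ)) := by ring
        rw [h8]
        linarith [h9]
end

section
/- For every n ≥ 1 there exists an affine transformation T of ℝ³ with |det T| ≥ (160 n)^{−1} such that T maps the closed Euclidean unit ball B into the half-ball D = {(x₁,x₂,x₃) : x₁²+x₂²+x₃² ≤ 1, x₃ ≥ 0} and T(1 + n^{−2}/3, 0, 0) = (1, 0, 0). -/
set_option maxHeartbeats 1000000 in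
/-- For every `n ≥ 1` there is an affine transformation `T` of `ℝ³` with
`|det T| ≥ (160 n)⁻¹` mapping the closed Euclidean unit ball into the half-ball
`D = {x : ‖x‖₂ ≤ 1, x₃ ≥ 0}` and sending `(1 + n^{-2}/3, 0, 0)` to `(1,0,0)`. -/
theorem stmt15 (n : ℕ) (hn : 1 ≤ n) :
    ∃ T : (Fin 3 → ℝ) →ᵃ[ℝ] (Fin 3 → ℝ),
      (160 * (n : ℝ))⁻¹ ≤ |LinearMap.det T.linear| ∧
      T '' {x : Fin 3 → ℝ | (x 0) ^ 2 + (x 1) ^ 2 + (x 2) ^ 2 ≤ 1}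
        ⊆ {x : Fin 3 → ℝ | (x 0) ^ 2 + (x 1) ^ 2 + (x 2) ^ 2 ≤ 1 ∧ 0 ≤ x 2} ∧
      T ![1 + ((n : ℝ) ^ 2)⁻¹ / 3, 0, 0] = ![1, 0, 0] := by
  have hn1 : (1:ℝ) ≤ (n:ℝ) := by exact_mod_cast hn
  have hnpos : (0:ℝ) < (n:ℝ) := by linarith
  set ε : ℝ := ((n : ℝ) ^ 2)⁻¹ / 3 with hεdef
  have hεpos : 0 < ε := by positivity
  have hεle : ε ≤ 1/3 := by
    have : (1:ℝ) ≤ (n:ℝ)^2 := by nlinarith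
    have h2 : ((n:ℝ)^2)⁻¹ ≤ 1 := by
      rw [inv_le_one_iff₀]; right; exact this
    simp only [hεdef]; linarith
  have hεn : ((n:ℝ)^2)⁻¹ = 3 * ε := by rw [hεdef]; ring
  set M : Matrix (Fin 3) (Fin 3) ℝ :=
    ![![1/2, 0, 0], ![0, 1/8, 0], ![-(1/8), 0, (10*(n:ℝ))⁻¹]] with hM
  set c : Fin 3 → ℝ := ![(1-ε)/2, 0, (1+ε)/8] with hc
  refine ⟨⟨fun x => c + M.mulVec x, Matrix.toLin' M, ?_⟩, ?_, ?_, ?_⟩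
  · intro p v
    simp only [vadd_eq_add, Matrix.toLin'_apply, Matrix.mulVec_add]
    abel
  · show (160 * (n:ℝ))⁻¹ ≤ |LinearMap.det (Matrix.toLin' M)|
    rw [LinearMap.det_toLin' M, Matrix.det_fin_three, hM]
    simp only [Matrix.cons_val', Matrix.cons_val_zero, Matrix.cons_val_one, Matrix.head_cons,
      Matrix.empty_val', Matrix.cons_val_fin_one, Matrix.head_fin_const, Matrix.cons_val_two,
      Matrix.tail_cons]
    have key : (1:ℝ) / 2 * (1 / 8) * (10 * (n:ℝ))⁻¹ - 1 / 2 * 0 * 0 - 0 * 0 * (10 * (n:ℝ))⁻¹ +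
        0 * 0 * -(1 / 8) + 0 * 0 * 0 - 0 * (1 / 8) * -(1 / 8) = (160 * (n:ℝ))⁻¹ := by
      rw [mul_inv, show ((160:ℝ)*(n:ℝ))⁻¹ = (160:ℝ)⁻¹ * ((n:ℝ))⁻¹ by rw [mul_inv],
        show ((160:ℝ))⁻¹ = (1/2) * (1/8) * (10:ℝ)⁻¹ by norm_num]
      ring
    rw [key, abs_of_nonneg (by positivity)]
  · rintro y ⟨x, hx, rfl⟩
    simp only [Set.mem_setOf_eq, AffineMap.coe_mk] at hx ⊢
    have hy : ∀ i, (c + M.mulVec x) i = c i + M.mulVec x i := fun i => rfl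
    have h0 : (c + M.mulVec x) 0 = (1-ε)/2 + x 0 / 2 := by
      rw [hy]; simp [hM, hc, Matrix.mulVec, dotProduct, Fin.sum_univ_three, Matrix.vecHead, Matrix.vecTail]; ring
    have h1 : (c + M.mulVec x) 1 = x 1 / 8 := by
      rw [hy]; simp [hM, hc, Matrix.mulVec, dotProduct, Fin.sum_univ_three, Matrix.vecHead, Matrix.vecTail]; ring
    have h2 : (c + M.mulVec x) 2 = (1+ε)/8 - x 0 / 8 + x 2 / (10*(n:ℝ)) := by
      rw [hy]; simp [hM, hc, Matrix.mulVec, dotProduct, Fin.sum_univ_three, Matrix.vecHead, Matrix.vecTail]; ring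
    rw [h0, h1, h2]
    set s : ℝ := 1 - x 0 with hs
    set t : ℝ := ε + s with ht
    set u : ℝ := x 2 / (10*(n:ℝ)) with hu
    have hx0 : (x 0)^2 ≤ 1 := by nlinarith [sq_nonneg (x 1), sq_nonneg (x 2)]
    have hx0le : x 0 ≤ 1 := by nlinarith
    have hx0ge : -1 ≤ x 0 := by nlinarith
    have hs0 : 0 ≤ s := by simp [hs]; linarith
    have hs2 : s ≤ 2 := by simp [hs]; linarith
    have hsum : (x 1)^2 + (x 2)^2 ≤ 2 * s := by nlinarith
    have hx1 : (x 1)^2 ≤ 2 * s := by nlinarith [sq_nonneg (x 2)]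
    have hx2 : (x 2)^2 ≤ 2 * s := by nlinarith [sq_nonneg (x 1)]
    have hn0 : (n:ℝ) ≠ 0 := hnpos.ne'
    have hn2ε : (n:ℝ)^2 * ε = 1/3 := by rw [hεdef]; field_simp
    have huq : u^2 * (100 * (n:ℝ)^2) = (x 2)^2 := by
      have h10 : (100 : ℝ) * (n:ℝ)^2 = (10*(n:ℝ))^2 := by ring
      rw [hu, div_pow, h10, div_mul_cancel₀]
      positivity
    have hu2 : u^2 ≤ 3 * s * ε / 50 := by
      have h100 : (0:ℝ) < 100 * (n:ℝ)^2 := by positivity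
      have hmul : u^2 * (100 * (n:ℝ)^2) ≤ (3 * s * ε / 50) * (100 * (n:ℝ)^2) := by
        rw [huq]
        nlinarith [hx2, hn2ε, hs0]
      exact le_of_mul_le_mul_right hmul h100
    have hne : (1+ε)/8 - x 0 / 8 + u = t/8 + u := by rw [ht, hs]; ring
    have hpos : 0 ≤ (1+ε)/8 - x 0 / 8 + x 2 / (10*(n:ℝ)) := by
      rw [hne]
      nlinarith [sq_nonneg (t/8 + u), sq_nonneg (t/8 - u), mul_nonneg hs0 hεpos.le,
        sq_nonneg (ε - s)]
    refine ⟨?_, hpos⟩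
    have heq : ((1-ε)/2 + x 0 / 2) = 1 - t/2 := by rw [ht, hs]; ring
    rw [heq, hne]
    have ht0 : 0 ≤ t := by rw [ht]; linarith
    have ht73 : t ≤ 7/3 := by rw [ht]; linarith
    nlinarith [sq_nonneg (t/8 - u), mul_nonneg ht0 (by linarith : (0:ℝ) ≤ 7/3 - t),
      hu2, hx1, hεpos.le, mul_nonneg hs0 hεpos.le]
  · show c + M.mulVec ![1 + ((n : ℝ) ^ 2)⁻¹ / 3, 0, 0] = ![1, 0, 0]
    funext i
    fin_cases i <;>
      simp [hM, hc, Matrix.mulVec, dotProduct, Fin.sum_univ_three,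
        Matrix.vecHead, Matrix.vecTail] <;> ring
end

section
/- The singleton {(1,0,0)} is a sharp subset of the half-ball D = {(x₁,x₂,x₃) ∈ ℝ³ : x₁²+x₂²+x₃² ≤ 1, x₃ ≥ 0}: there is a constant c > 0 (one may take c = 1/8) such that for every x ∈ D there exists an affine transformation T of ℝ³ with |det T| ≥ c, T(1,0,0) = x, and T(D) ⊂ D. -/
noncomputable def affT (A : Matrix (Fin 3) (Fin 3) ℝ) (v : Fin 3 → ℝ) :
    (Fin 3 → ℝ) →ᵃ[ℝ] (Fin 3 → ℝ) where
  toFun z := A.mulVec z + v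
  linear := Matrix.toLin' A
  map_vadd' p q := by
    simp [Matrix.toLin'_apply, Matrix.mulVec_add, vadd_eq_add]
    abel

theorem affT_apply (A : Matrix (Fin 3) (Fin 3) ℝ) (v z : Fin 3 → ℝ) :
    affT A v z = A.mulVec z + v := rfl

theorem bound_aux (n S : ℝ) (hn : n^2 ≤ 1) (hS : S ≤ 4) (hS0 : 0 ≤ S) :
    n^2/4*S ≤ 1 := by nlinarith

theorem affT_det (A : Matrix (Fin 3) (Fin 3) ℝ) (v : Fin 3 → ℝ) :
    LinearMap.det (affT A v).linear = A.det := by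
  simp [affT, LinearMap.det_toLin']

set_option maxHeartbeats 1000000 in
/-- The singleton `{(1,0,0)}` is a sharp subset of the half-ball
`D = {x ∈ ℝ³ : ‖x‖₂ ≤ 1, x₃ ≥ 0}`: there is `c > 0` such that for every `x ∈ D` there is
an affine transformation `T` of `ℝ³` with `|det T| ≥ c`, `T(1,0,0) = x` and `T(D) ⊆ D`. -/
theorem stmt16 :
    ∃ c : ℝ, 0 < c ∧
      ∀ x ∈ {z : Fin 3 → ℝ | (z 0) ^ 2 + (z 1) ^ 2 + (z 2) ^ 2 ≤ 1 ∧ 0 ≤ z 2},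
        ∃ T : (Fin 3 → ℝ) →ᵃ[ℝ] (Fin 3 → ℝ),
          c ≤ |LinearMap.det T.linear| ∧
          T ![1, 0, 0] = x ∧
          T '' {z : Fin 3 → ℝ | (z 0) ^ 2 + (z 1) ^ 2 + (z 2) ^ 2 ≤ 1 ∧ 0 ≤ z 2}
            ⊆ {z : Fin 3 → ℝ | (z 0) ^ 2 + (z 1) ^ 2 + (z 2) ^ 2 ≤ 1 ∧ 0 ≤ z 2} := by
  refine ⟨1/512, by norm_num, ?_⟩
  rintro x ⟨hx1, hx2⟩
  by_cases hsmall : x 0 ^ 2 + x 1 ^ 2 + x 2 ^ 2 ≤ 1/4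
  · -- Case 1: ‖x‖ ≤ 1/2, homothety of ratio 1/8 with e₁ ↦ x
    refine ⟨affT !![(1:ℝ)/8,0,0; 0,1/8,0; 0,0,1/8] ![x 0 - 1/8, x 1, x 2], ?_, ?_, ?_⟩
    · rw [affT_det]
      have : Matrix.det !![(1:ℝ)/8,0,0; 0,1/8,0; 0,0,1/8] = 1/512 := by
        simp [Matrix.det_fin_three]; norm_num
      rw [this, abs_of_nonneg (by norm_num)]
    · rw [affT_apply]; funext i; fin_cases i <;>
        simp [Matrix.mulVec, dotProduct, Fin.sum_univ_three]
    · rintro _ ⟨z, ⟨hz1, hz2⟩, rfl⟩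
      rw [affT_apply]
      simp only [Set.mem_setOf_eq, Pi.add_apply]
      have e0 : (Matrix.mulVec !![(1:ℝ)/8,0,0; 0,1/8,0; 0,0,1/8] z) 0 = z 0 / 8 := by
        simp [Matrix.mulVec, dotProduct, Fin.sum_univ_three]; ring
      have e1 : (Matrix.mulVec !![(1:ℝ)/8,0,0; 0,1/8,0; 0,0,1/8] z) 1 = z 1 / 8 := by
        simp [Matrix.mulVec, dotProduct, Fin.sum_univ_three]; ring
      have e2 : (Matrix.mulVec !![(1:ℝ)/8,0,0; 0,1/8,0; 0,0,1/8] z) 2 = z 2 / 8 := by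
        simp [Matrix.mulVec, dotProduct, Fin.sum_univ_three]; ring
      rw [e0, e1, e2]
      simp only [Matrix.cons_val_zero, Matrix.cons_val_one, Matrix.head_cons]
      have h2 : (![x 0 - 1/8, x 1, x 2] : Fin 3 → ℝ) 2 = x 2 := rfl
      rw [h2]
      constructor
      · nlinarith [sq_nonneg (5 * z 0 - 8 * (x 0 - 1/8)), sq_nonneg (5 * z 1 - 8 * x 1),
          sq_nonneg (5 * z 2 - 8 * x 2), sq_nonneg (x 0 + 1/2), hz1, hsmall,
          sq_nonneg (x 1), sq_nonneg (x 2)]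
      · positivity
  · push_neg at hsmall
    by_cases hab : x 0 ^ 2 + x 1 ^ 2 = 0
    · -- Case 2: x = (0,0,d) with d ≥ 1/2: rotation by π/2 ∘ homothety at e₁
      have ha : x 0 = 0 := by nlinarith [sq_nonneg (x 0), sq_nonneg (x 1)]
      have hb : x 1 = 0 := by nlinarith [sq_nonneg (x 0), sq_nonneg (x 1)]
      have hd : 1/2 ≤ x 2 := by nlinarith
      refine ⟨affT !![0,0,-(x 2)/2; 0,(x 2)/2,0; (x 2)/2,0,0] ![0,0,(x 2)/2], ?_, ?_, ?_⟩
      · rw [affT_det]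
        have : Matrix.det !![0,0,-(x 2)/2; 0,(x 2)/2,0; (x 2)/2,0,0] = (x 2)^3/8 := by
          simp [Matrix.det_fin_three]; ring
        rw [this, abs_of_nonneg (by positivity)]
        nlinarith [hd, sq_nonneg (x 2)]
      · rw [affT_apply]; funext i; fin_cases i <;>
          simp [Matrix.mulVec, dotProduct, Fin.sum_univ_three, ha, hb]
      · rintro _ ⟨z, ⟨hz1, hz2⟩, rfl⟩
        rw [affT_apply]
        simp only [Set.mem_setOf_eq, Pi.add_apply]
        have e0 : (Matrix.mulVec !![0,0,-(x 2)/2; 0,(x 2)/2,0; (x 2)/2,0,0] z) 0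
            = -(x 2) * z 2 / 2 := by
          simp [Matrix.mulVec, dotProduct, Fin.sum_univ_three]; ring
        have e1 : (Matrix.mulVec !![0,0,-(x 2)/2; 0,(x 2)/2,0; (x 2)/2,0,0] z) 1
            = (x 2) * z 1 / 2 := by
          simp [Matrix.mulVec, dotProduct, Fin.sum_univ_three]; ring
        have e2 : (Matrix.mulVec !![0,0,-(x 2)/2; 0,(x 2)/2,0; (x 2)/2,0,0] z) 2
            = (x 2) * z 0 / 2 := by
          simp [Matrix.mulVec, dotProduct, Fin.sum_univ_three]; ring
        rw [e0, e1, e2]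
        have v0 : (![0,0,(x 2)/2] : Fin 3 → ℝ) 0 = 0 := rfl
        have v1 : (![0,0,(x 2)/2] : Fin 3 → ℝ) 1 = 0 := rfl
        have v2 : (![0,0,(x 2)/2] : Fin 3 → ℝ) 2 = (x 2)/2 := rfl
        rw [v0, v1, v2]
        have hz0 : -1 ≤ z 0 := by
          nlinarith [sq_nonneg (z 1), sq_nonneg (z 2), sq_nonneg (z 0 + 1)]
        have hx2sq : x 2 ^ 2 ≤ 1 := by nlinarith [sq_nonneg (x 0), sq_nonneg (x 1)]
        have hS : z 2 ^ 2 + z 1 ^ 2 + (z 0 + 1) ^ 2 ≤ 4 := by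
          nlinarith [hz1, sq_nonneg (z 0 - 1)]
        have hS0 : 0 ≤ z 2 ^ 2 + z 1 ^ 2 + (z 0 + 1) ^ 2 := by positivity
        constructor
        · nlinarith [mul_nonneg (sub_nonneg.2 hx2sq) hS0, hS, hx2sq]
        · nlinarith [hz0, hx2]
    · -- Case 3: general position, rotation sending e₁ to x/‖x‖ ∘ homothety at e₁
      have hppos : 0 < x 0 ^ 2 + x 1 ^ 2 :=
        (lt_or_eq_of_le (by positivity : (0:ℝ) ≤ x 0 ^ 2 + x 1 ^ 2)).resolve_right
          fun h => hab h.symm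
      set a := x 0 with haa
      set b := x 1 with hbb
      set d := x 2 with hdd
      set p := Real.sqrt (a^2 + b^2) with hp
      set n := Real.sqrt (a^2 + b^2 + d^2) with hn
      have hp2 : p^2 = a^2 + b^2 := Real.sq_sqrt (by positivity)
      have hn2 : n^2 = a^2 + b^2 + d^2 := Real.sq_sqrt (by positivity)
      have hp0 : 0 < p := Real.sqrt_pos.mpr hppos
      have hpne : p ≠ 0 := hp0.ne'
      have hn0 : 0 ≤ n := Real.sqrt_nonneg _
      have hn1 : n ≤ 1 := by nlinarith
      have hnhalf : 1/2 ≤ n := by nlinarith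
      refine ⟨affT !![a/2, -(b*n)/(2*p), -(a*d)/(2*p);
                      b/2,  (a*n)/(2*p), -(b*d)/(2*p);
                      d/2,  0,            p/2] ![a/2, b/2, d/2], ?_, ?_, ?_⟩
      · rw [affT_det]
        have hdet : Matrix.det !![a/2, -(b*n)/(2*p), -(a*d)/(2*p);
                      b/2,  (a*n)/(2*p), -(b*d)/(2*p);
                      d/2,  0,            p/2] = n^3/8 := by
          rw [Matrix.det_fin_three]
          simp [Matrix.cons_val_zero]
          field_simp
          linear_combination (-(8:ℝ)*p^2)*hn2 + (-(8:ℝ)*d^2)*hp2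
        rw [hdet, abs_of_nonneg (by positivity)]
        nlinarith
      · rw [affT_apply]; funext i; fin_cases i <;>
          simp [Matrix.mulVec, dotProduct, Fin.sum_univ_three] <;> ring
      · rintro _ ⟨z, ⟨hz1, hz2⟩, rfl⟩
        rw [affT_apply]
        simp only [Set.mem_setOf_eq, Pi.add_apply]
        have e0 : (Matrix.mulVec !![a/2, -(b*n)/(2*p), -(a*d)/(2*p);
                      b/2,  (a*n)/(2*p), -(b*d)/(2*p);
                      d/2,  0,            p/2] z) 0
            = a/2 * z 0 + -(b*n)/(2*p) * z 1 + -(a*d)/(2*p) * z 2 := by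
          simp [Matrix.mulVec, dotProduct, Fin.sum_univ_three]
        have e1 : (Matrix.mulVec !![a/2, -(b*n)/(2*p), -(a*d)/(2*p);
                      b/2,  (a*n)/(2*p), -(b*d)/(2*p);
                      d/2,  0,            p/2] z) 1
            = b/2 * z 0 + (a*n)/(2*p) * z 1 + -(b*d)/(2*p) * z 2 := by
          simp [Matrix.mulVec, dotProduct, Fin.sum_univ_three]
        have e2 : (Matrix.mulVec !![a/2, -(b*n)/(2*p), -(a*d)/(2*p);
                      b/2,  (a*n)/(2*p), -(b*d)/(2*p);
                      d/2,  0,            p/2] z) 2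
            = d/2 * z 0 + 0 * z 1 + p/2 * z 2 := by
          simp [Matrix.mulVec, dotProduct, Fin.sum_univ_three]
        rw [e0, e1, e2]
        have v0 : (![a/2, b/2, d/2] : Fin 3 → ℝ) 0 = a/2 := rfl
        have v1 : (![a/2, b/2, d/2] : Fin 3 → ℝ) 1 = b/2 := rfl
        have v2 : (![a/2, b/2, d/2] : Fin 3 → ℝ) 2 = d/2 := rfl
        rw [v0, v1, v2]
        have hz0 : -1 ≤ z 0 ∧ z 0 ≤ 1 := by
          constructor <;> nlinarith [sq_nonneg (z 1), sq_nonneg (z 2),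
            sq_nonneg (z 0 + 1), sq_nonneg (z 0 - 1)]
        have hS : z 0^2 + z 1^2 + z 2^2 + 2*z 0 + 1 ≤ 4 := by
          have h1 := hz0.2
          have h2 := hz1
          linarith
        have hS0 : 0 ≤ z 0^2 + z 1^2 + z 2^2 + 2*z 0 + 1 := by
          have h1 := sq_nonneg (z 0 + 1)
          have h2 := sq_nonneg (z 1)
          have h3 := sq_nonneg (z 2)
          have h4 : z 0^2 + 2*z 0 + 1 = (z 0 + 1)^2 := by ring
          linarith
        have hn1sq : n^2 ≤ 1 := pow_le_one₀ hn0 hn1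
        have keyW : (a*z 0*p - b*n*z 1 - a*d*z 2 + a*p)^2
            + (b*z 0*p + a*n*z 1 - b*d*z 2 + b*p)^2
            + (p*(d*z 0 + p*z 2 + d))^2
            = n^2*p^2*(z 0^2+z 1^2+z 2^2+2*z 0+1) := by
          linear_combination ((-1)*p^2 + (-1)*p^2*z 2^2 + (-1)*p^2*z 1^2 + (-2)*p^2*z 0
              + (-1)*p^2*z 0^2 + b^2*z 1^2 + a^2*z 1^2) * hn2
            + (p^2*z 2^2 + 2*d*p*z 2 + 2*d*p*z 0*z 2 + (-1)*d^2*z 2^2 + (-1)*d^2*z 1^2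
              + (-1)*b^2*z 1^2 + (-1)*a^2*z 1^2) * hp2
        have key : (a/2 * z 0 + -(b*n)/(2*p) * z 1 + -(a*d)/(2*p) * z 2 + a/2)^2
            + (b/2 * z 0 + (a*n)/(2*p) * z 1 + -(b*d)/(2*p) * z 2 + b/2)^2
            + (d/2 * z 0 + 0 * z 1 + p/2 * z 2 + d/2)^2
            = n^2/4 * (z 0^2 + z 1^2 + z 2^2 + 2*z 0 + 1) := by
          have ew0 : a/2 * z 0 + -(b*n)/(2*p) * z 1 + -(a*d)/(2*p) * z 2 + a/2
              = (a*z 0*p - b*n*z 1 - a*d*z 2 + a*p)/(2*p) := by field_simp; ring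
          have ew1 : b/2 * z 0 + (a*n)/(2*p) * z 1 + -(b*d)/(2*p) * z 2 + b/2
              = (b*z 0*p + a*n*z 1 - b*d*z 2 + b*p)/(2*p) := by field_simp; ring
          have ew2 : d/2 * z 0 + 0 * z 1 + p/2 * z 2 + d/2
              = (p*(d*z 0 + p*z 2 + d))/(2*p) := by field_simp; ring
          rw [ew0, ew1, ew2, div_pow, div_pow, div_pow, ← add_div,
            ← add_div, keyW]
          field_simp
          ring
        constructor
        · rw [key]
          exact bound_aux _ _ hn1sq hS hS0
        · have h1 : (0:ℝ) ≤ d * (z 0 + 1) := mul_nonneg hx2 (by linarith [hz0.1])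
          have h2 : (0:ℝ) ≤ p * z 2 := mul_nonneg hp0.le hz2
          clear key keyW e0 e1 e2 v0 v1 v2
          nlinarith [h1, h2]
end

section
/- Let A ⊂ ℝ^k and B ⊂ ℝ^l be bounded domains with positive measure, and let Λ_n^A(x) := C(𝒫_{n,k}, A, x) and Λ_n^B(y) := C(𝒫_{n,l}, B, y) denote the inverse Christoffel functions for total-degree-n polynomials with Lebesgue measure. Then for all x ∈ A, y ∈ B and n ≥ 2: Λ_{⌊n/2⌋}^A(x)·Λ_{⌊n/2⌋}^B(y) ≤ C(𝒫_{n,k+l}, A×B, (x,y)) ≤ Λ_n^A(x)·Λ_n^B(y). -/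
open MeasureTheory
open MvPolynomial

lemma stmt17_rpow_eq {c J : ℝ} (hc : 0 < c) (hJ : 0 ≤ J)
    (h : c ^ (-(1:ℝ)/2) = J ^ ((1:ℝ)/2)) : J = c⁻¹ := by
  have h1 : (c ^ (-(1:ℝ)/2)) ^ (2:ℕ) = c⁻¹ := by
    rw [← Real.rpow_natCast (c ^ (-(1:ℝ)/2)) 2, ← Real.rpow_mul hc.le]
    norm_num [Real.rpow_neg_one]
  have h2 : (J ^ ((1:ℝ)/2)) ^ (2:ℕ) = J := by
    rw [← Real.rpow_natCast (J ^ ((1:ℝ)/2)) 2, ← Real.rpow_mul hJ]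
    norm_num
  rw [← h2, ← h, h1]

lemma stmt17_rpow_le {c J : ℝ} (hc : 0 < c) (hJ : 0 ≤ J)
    (h : c ^ (-(1:ℝ)/2) ≤ J ^ ((1:ℝ)/2)) : c⁻¹ ≤ J := by
  have h1 : (c ^ (-(1:ℝ)/2)) ^ (2:ℕ) = c⁻¹ := by
    rw [← Real.rpow_natCast (c ^ (-(1:ℝ)/2)) 2, ← Real.rpow_mul hc.le]
    norm_num [Real.rpow_neg_one]
  have h2 : (J ^ ((1:ℝ)/2)) ^ (2:ℕ) = J := by
    rw [← Real.rpow_natCast (J ^ ((1:ℝ)/2)) 2, ← Real.rpow_mul hJ]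
    norm_num
  calc c⁻¹ = (c ^ (-(1:ℝ)/2)) ^ (2:ℕ) := h1.symm
    _ ≤ (J ^ ((1:ℝ)/2)) ^ (2:ℕ) := by
        exact pow_le_pow_left₀ (Real.rpow_nonneg hc.le _) h 2
    _ = J := h2

lemma stmt17_totalDegree_aeval_le {σ τ : Type*} (g : σ → MvPolynomial τ ℝ)
    (hg : ∀ i, (g i).totalDegree ≤ 1) (P : MvPolynomial σ ℝ) :
    (aeval g P).totalDegree ≤ P.totalDegree := by
  rw [aeval_def, eval₂_eq]
  refine (totalDegree_finset_sum _ _).trans (Finset.sup_le fun d hd => ?_)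
  calc ((algebraMap ℝ (MvPolynomial τ ℝ)) (coeff d P) *
          ∏ i ∈ d.support, g i ^ d i).totalDegree
      ≤ ((algebraMap ℝ (MvPolynomial τ ℝ)) (coeff d P)).totalDegree +
          (∏ i ∈ d.support, g i ^ d i).totalDegree := totalDegree_mul _ _
    _ = (∏ i ∈ d.support, g i ^ d i).totalDegree := by
        rw [MvPolynomial.algebraMap_eq, totalDegree_C, zero_add]
    _ ≤ ∑ i ∈ d.support, (g i ^ d i).totalDegree := totalDegree_finset_prod _ _
    _ ≤ ∑ i ∈ d.support, d i := by
        refine Finset.sum_le_sum fun i _ => ?_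
        exact (totalDegree_pow _ _).trans (by
          simpa using Nat.mul_le_mul_left (d i) (hg i))
    _ ≤ P.totalDegree := le_totalDegree hd

lemma stmt17_eval_aeval {σ τ : Type*} (g : σ → MvPolynomial τ ℝ) (u : τ → ℝ)
    (P : MvPolynomial σ ℝ) :
    eval u (aeval g P) = eval (fun i => eval u (g i)) P := by
  rw [aeval_def, eval₂_comp_left (eval u)]
  have hid : (eval u).comp (algebraMap ℝ (MvPolynomial τ ℝ)) = RingHom.id ℝ := by
    ext r; simp [MvPolynomial.algebraMap_eq]
  rw [hid]
  rfl

-- partial evaluation in the second block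
noncomputable def stmt17_pevalR {k l : ℕ} (w : Fin l → ℝ) (P : MvPolynomial (Fin (k+l)) ℝ) :
    MvPolynomial (Fin k) ℝ :=
  aeval (Fin.append (fun j => X j) (fun j => C (w j))) P

lemma stmt17_eval_pevalR {k l : ℕ} (w : Fin l → ℝ) (P : MvPolynomial (Fin (k+l)) ℝ)
    (u : Fin k → ℝ) : eval u (stmt17_pevalR w P) = eval (Fin.append u w) P := by
  rw [stmt17_pevalR, stmt17_eval_aeval]
  have hfun : (fun i => eval u (Fin.append (fun j => (X j : MvPolynomial (Fin k) ℝ))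
      (fun j => C (w j)) i)) = Fin.append u w := by
    funext i
    refine Fin.addCases (fun j => ?_) (fun j => ?_) i <;>
      simp [Fin.append_left, Fin.append_right]
  rw [hfun]

lemma stmt17_deg_pevalR {k l : ℕ} (w : Fin l → ℝ) (P : MvPolynomial (Fin (k+l)) ℝ) :
    (stmt17_pevalR (k := k) w P).totalDegree ≤ P.totalDegree := by
  refine stmt17_totalDegree_aeval_le _ (fun i => ?_) P
  refine Fin.addCases (fun j => ?_) (fun j => ?_) i
  · simp [Fin.append_left, totalDegree_X]
  · simp [Fin.append_right]

noncomputable def stmt17_pevalL {k l : ℕ} (u : Fin k → ℝ) (P : MvPolynomial (Fin (k+l)) ℝ) :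
    MvPolynomial (Fin l) ℝ :=
  aeval (Fin.append (fun j => C (u j)) (fun j => X j)) P

lemma stmt17_eval_pevalL {k l : ℕ} (u : Fin k → ℝ) (P : MvPolynomial (Fin (k+l)) ℝ)
    (w : Fin l → ℝ) : eval w (stmt17_pevalL u P) = eval (Fin.append u w) P := by
  rw [stmt17_pevalL, stmt17_eval_aeval]
  have hfun : (fun i => eval w (Fin.append (fun j => C (u j))
      (fun j => (X j : MvPolynomial (Fin l) ℝ)) i)) = Fin.append u w := by
    funext i
    refine Fin.addCases (fun j => ?_) (fun j => ?_) i <;>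
      simp [Fin.append_left, Fin.append_right]
  rw [hfun]

lemma stmt17_deg_pevalL {k l : ℕ} (u : Fin k → ℝ) (P : MvPolynomial (Fin (k+l)) ℝ) :
    (stmt17_pevalL (l := l) u P).totalDegree ≤ P.totalDegree := by
  refine stmt17_totalDegree_aeval_le _ (fun i => ?_) P
  refine Fin.addCases (fun j => ?_) (fun j => ?_) i
  · simp [Fin.append_left]
  · simp [Fin.append_right, totalDegree_X]
lemma stmt17_key {σ : Type} [Fintype σ] {D : Set (σ → ℝ)} {y : σ → ℝ} {N : ℕ} {c : ℝ}
    (hc : 0 < c)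
    (h : IsLeast {t : ℝ | ∃ P : MvPolynomial σ ℝ, P.totalDegree ≤ N ∧
        |MvPolynomial.eval y P| = 1 ∧
        t = (∫ z in D, (MvPolynomial.eval z P) ^ 2) ^ ((1 : ℝ) / 2)} (c ^ (-(1 : ℝ) / 2)))
    (Q : MvPolynomial σ ℝ) (hQ : Q.totalDegree ≤ N) :
    c⁻¹ * (eval y Q) ^ 2 ≤ ∫ z in D, (eval z Q) ^ 2 := by
  have hint : (0:ℝ) ≤ ∫ z in D, (eval z Q) ^ 2 :=
    integral_nonneg fun z => sq_nonneg _
  by_cases h0 : eval y Q = 0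
  · simpa [h0] using hint
  · set d : ℝ := |eval y Q| with hd
    have hdpos : 0 < d := abs_pos.mpr h0
    set Q' : MvPolynomial σ ℝ := C d⁻¹ * Q with hQ'
    have hmem : ((∫ z in D, (eval z Q') ^ 2) ^ ((1:ℝ)/2)) ∈
        {t : ℝ | ∃ P : MvPolynomial σ ℝ, P.totalDegree ≤ N ∧
          |MvPolynomial.eval y P| = 1 ∧
          t = (∫ z in D, (MvPolynomial.eval z P) ^ 2) ^ ((1 : ℝ) / 2)} := by
      refine ⟨Q', ?_, ?_, rfl⟩
      · exact (totalDegree_mul _ _).trans (by simpa [totalDegree_C] using hQ)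
      · rw [hQ', eval_mul, eval_C, abs_mul, abs_inv, abs_abs, ← hd]
        field_simp
    have h2 := h.2 hmem
    have hJ' : ∫ z in D, (eval z Q') ^ 2 = d⁻¹ ^ 2 * ∫ z in D, (eval z Q) ^ 2 := by
      simp_rw [hQ', eval_mul, eval_C, mul_pow, integral_const_mul]
    have h3 : c⁻¹ ≤ d⁻¹ ^ 2 * ∫ z in D, (eval z Q) ^ 2 := by
      have := stmt17_rpow_le hc (integral_nonneg fun z => sq_nonneg _) h2
      rwa [hJ'] at this
    have h4 : c⁻¹ * d ^ 2 ≤ (d⁻¹ ^ 2 * ∫ z in D, (eval z Q) ^ 2) * d ^ 2 :=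
      mul_le_mul_of_nonneg_right h3 (sq_nonneg d)
    have h5 : (d⁻¹ ^ 2 * ∫ z in D, (eval z Q) ^ 2) * d ^ 2 = ∫ z in D, (eval z Q) ^ 2 := by
      field_simp
    rw [h5] at h4
    calc c⁻¹ * (eval y Q) ^ 2 = c⁻¹ * d ^ 2 := by rw [hd, sq_abs]
      _ ≤ _ := h4
noncomputable def stmt17_e (k l : ℕ) : ((Fin k → ℝ) × (Fin l → ℝ)) ≃ᵐ (Fin (k+l) → ℝ) :=
  (MeasurableEquiv.sumPiEquivProdPi (fun _ : Fin k ⊕ Fin l => ℝ)).symm.trans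
    (MeasurableEquiv.piCongrLeft (fun _ => ℝ) finSumFinEquiv)

lemma stmt17_e_mp (k l : ℕ) : MeasurePreserving (stmt17_e k l) volume volume :=
  (volume_measurePreserving_piCongrLeft (fun _ => ℝ) finSumFinEquiv).comp
    (volume_measurePreserving_sumPiEquivProdPi_symm (fun _ => ℝ))

lemma stmt17_e_apply (k l : ℕ) (u : Fin k → ℝ) (w : Fin l → ℝ) :
    stmt17_e k l (u, w) = Fin.append u w := by
  funext i
  obtain ⟨s, rfl⟩ := finSumFinEquiv.surjective i
  cases s with
  | inl j =>
    have h1 : stmt17_e k l (u, w) (finSumFinEquiv (Sum.inl j)) = u j := by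
      show (MeasurableEquiv.piCongrLeft (fun _ => ℝ) finSumFinEquiv)
        ((MeasurableEquiv.sumPiEquivProdPi (fun _ : Fin k ⊕ Fin l => ℝ)).symm (u, w))
        (finSumFinEquiv (Sum.inl j)) = u j
      rw [MeasurableEquiv.coe_piCongrLeft, MeasurableEquiv.coe_sumPiEquivProdPi_symm]
      exact Equiv.piCongrLeft_sumInl (fun _ : Fin (k+l) => ℝ) finSumFinEquiv u w j
    rw [h1, finSumFinEquiv_apply_left, Fin.append_left]
  | inr j =>
    have h1 : stmt17_e k l (u, w) (finSumFinEquiv (Sum.inr j)) = w j := by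
      show (MeasurableEquiv.piCongrLeft (fun _ => ℝ) finSumFinEquiv)
        ((MeasurableEquiv.sumPiEquivProdPi (fun _ : Fin k ⊕ Fin l => ℝ)).symm (u, w))
        (finSumFinEquiv (Sum.inr j)) = w j
      rw [MeasurableEquiv.coe_piCongrLeft, MeasurableEquiv.coe_sumPiEquivProdPi_symm]
      exact Equiv.piCongrLeft_sumInr (fun _ : Fin (k+l) => ℝ) finSumFinEquiv u w j
    rw [h1, finSumFinEquiv_apply_right, Fin.append_right]
lemma stmt17_setIntegral (k l : ℕ) (A : Set (Fin k → ℝ)) (B : Set (Fin l → ℝ))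
    (f : (Fin (k+l) → ℝ) → ℝ) :
    ∫ z in {z : Fin (k + l) → ℝ | ∃ u ∈ A, ∃ w ∈ B, z = Fin.append u w}, f z
      = ∫ p, f (Fin.append p.1 p.2) ∂((volume.restrict A).prod (volume.restrict B)) := by
  have hS : {z : Fin (k + l) → ℝ | ∃ u ∈ A, ∃ w ∈ B, z = Fin.append u w}
      = stmt17_e k l '' (A ×ˢ B) := by
    ext z
    constructor
    · rintro ⟨u, hu, w, hw, rfl⟩
      exact ⟨(u, w), ⟨hu, hw⟩, stmt17_e_apply k l u w⟩
    · rintro ⟨⟨u, w⟩, ⟨hu, hw⟩, rfl⟩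
      exact ⟨u, hu, w, hw, stmt17_e_apply k l u w⟩
  rw [hS, (stmt17_e_mp k l).setIntegral_image_emb (stmt17_e k l).measurableEmbedding f (A ×ˢ B)]
  rw [Measure.volume_eq_prod, Measure.prod_restrict]
  refine integral_congr_ae (Filter.Eventually.of_forall fun p => ?_)
  obtain ⟨u, w⟩ := p
  show f (stmt17_e k l (u, w)) = f (Fin.append u w)
  rw [stmt17_e_apply]
lemma stmt17_integrableOn {N : ℕ} (f : (Fin N → ℝ) → ℝ) (hf : Continuous f)
    {D : Set (Fin N → ℝ)} (hD : Bornology.IsBounded D) : IntegrableOn f D := by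
  have hK : IsCompact (closure D) :=
    Metric.isCompact_of_isClosed_isBounded isClosed_closure hD.closure
  exact (hf.continuousOn.integrableOn_compact hK).mono_set subset_closure

lemma stmt17_integrable_prod {k l : ℕ} (f : ((Fin k → ℝ) × (Fin l → ℝ)) → ℝ)
    (hf : Continuous f) {A : Set (Fin k → ℝ)} {B : Set (Fin l → ℝ)}
    (hA : Bornology.IsBounded A) (hB : Bornology.IsBounded B) :
    Integrable f ((volume.restrict A).prod (volume.restrict B)) := by
  rw [Measure.prod_restrict, ← Measure.volume_eq_prod]
  have hK : IsCompact (closure A ×ˢ closure B) :=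
    (Metric.isCompact_of_isClosed_isBounded isClosed_closure hA.closure).prod
      (Metric.isCompact_of_isClosed_isBounded isClosed_closure hB.closure)
  exact (hf.continuousOn.integrableOn_compact hK).mono_set
    (Set.prod_mono subset_closure subset_closure)

lemma stmt17_cont_append {k l : ℕ} :
    Continuous fun p : (Fin k → ℝ) × (Fin l → ℝ) => Fin.append p.1 p.2 := by
  refine continuous_pi fun i => ?_
  refine Fin.addCases (motive := fun i => Continuous fun p :
      (Fin k → ℝ) × (Fin l → ℝ) => Fin.append p.1 p.2 i) (fun j => ?_) (fun j => ?_) i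
  · simp only [Fin.append_left]
    exact (continuous_apply j).comp continuous_fst
  · simp only [Fin.append_right]
    exact (continuous_apply j).comp continuous_snd
/-- For bounded domains `A ⊂ ℝ^k`, `B ⊂ ℝ^l` of positive measure,
`x ∈ A`, `y ∈ B` and `n ≥ 2`, the inverse Christoffel functions (for total-degree
polynomials, Lebesgue measure), characterized variationally by
`C(𝒫,D,z)^{-1/2} = min{‖f‖_{L²(D)} : f ∈ 𝒫, |f(z)| = 1}`, satisfy
`Λ_{⌊n/2⌋}^A(x) Λ_{⌊n/2⌋}^B(y) ≤ C(𝒫_{n,k+l}, A×B, (x,y)) ≤ Λ_n^A(x) Λ_n^B(y)`. -/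
theorem stmt17 (k l : ℕ) (A : Set (Fin k → ℝ)) (B : Set (Fin l → ℝ))
    (hAbd : Bornology.IsBounded A) (hBbd : Bornology.IsBounded B)
    (hAvol : 0 < volume A) (hBvol : 0 < volume B)
    (x : Fin k → ℝ) (hx : x ∈ A) (y : Fin l → ℝ) (hy : y ∈ B)
    (n : ℕ) (hn : 2 ≤ n)
    (a a2 b b2 m : ℝ) (ha : 0 < a) (ha2 : 0 < a2) (hb : 0 < b) (hb2 : 0 < b2) (hm : 0 < m)
    (hA : IsLeast {t : ℝ | ∃ P : MvPolynomial (Fin k) ℝ, P.totalDegree ≤ n ∧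
        |MvPolynomial.eval x P| = 1 ∧
        t = (∫ z in A, (MvPolynomial.eval z P) ^ 2) ^ ((1 : ℝ) / 2)}
      (a ^ (-(1 : ℝ) / 2)))
    (hA2 : IsLeast {t : ℝ | ∃ P : MvPolynomial (Fin k) ℝ, P.totalDegree ≤ n / 2 ∧
        |MvPolynomial.eval x P| = 1 ∧
        t = (∫ z in A, (MvPolynomial.eval z P) ^ 2) ^ ((1 : ℝ) / 2)}
      (a2 ^ (-(1 : ℝ) / 2)))
    (hB : IsLeast {t : ℝ | ∃ P : MvPolynomial (Fin l) ℝ, P.totalDegree ≤ n ∧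
        |MvPolynomial.eval y P| = 1 ∧
        t = (∫ z in B, (MvPolynomial.eval z P) ^ 2) ^ ((1 : ℝ) / 2)}
      (b ^ (-(1 : ℝ) / 2)))
    (hB2 : IsLeast {t : ℝ | ∃ P : MvPolynomial (Fin l) ℝ, P.totalDegree ≤ n / 2 ∧
        |MvPolynomial.eval y P| = 1 ∧
        t = (∫ z in B, (MvPolynomial.eval z P) ^ 2) ^ ((1 : ℝ) / 2)}
      (b2 ^ (-(1 : ℝ) / 2)))
    (hAB : IsLeast {t : ℝ | ∃ P : MvPolynomial (Fin (k + l)) ℝ, P.totalDegree ≤ n ∧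
        |MvPolynomial.eval (Fin.append x y) P| = 1 ∧
        t = (∫ z in {z : Fin (k + l) → ℝ | ∃ u ∈ A, ∃ w ∈ B, z = Fin.append u w},
              (MvPolynomial.eval z P) ^ 2) ^ ((1 : ℝ) / 2)}
      (m ^ (-(1 : ℝ) / 2))) :
    a2 * b2 ≤ m ∧ m ≤ a * b := by
  constructor
  · -- a2 * b2 ≤ m
    obtain ⟨PA, hPA1, hPA2, hPA3⟩ := hA2.1
    obtain ⟨PB, hPB1, hPB2, hPB3⟩ := hB2.1
    have hIA : ∫ z in A, (eval z PA) ^ 2 = a2⁻¹ :=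
      stmt17_rpow_eq ha2 (integral_nonneg fun _ => sq_nonneg _) hPA3
    have hIB : ∫ z in B, (eval z PB) ^ 2 = b2⁻¹ :=
      stmt17_rpow_eq hb2 (integral_nonneg fun _ => sq_nonneg _) hPB3
    set P : MvPolynomial (Fin (k + l)) ℝ :=
      rename (Fin.castAdd l) PA * rename (Fin.natAdd k) PB with hP
    have hdeg : P.totalDegree ≤ n := by
      refine (totalDegree_mul _ _).trans ?_
      have h1 := totalDegree_rename_le (Fin.castAdd l) PA
      have h2 := totalDegree_rename_le (Fin.natAdd k) PB
      omega
    have hev : ∀ (u : Fin k → ℝ) (w : Fin l → ℝ),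
        eval (Fin.append u w) P = eval u PA * eval w PB := by
      intro u w
      rw [hP, eval_mul, eval_rename, eval_rename]
      have e1 : (Fin.append u w) ∘ (Fin.castAdd l) = u :=
        funext fun j => Fin.append_left u w j
      have e2 : (Fin.append u w) ∘ (Fin.natAdd k) = w :=
        funext fun j => Fin.append_right u w j
      rw [e1, e2]
    have habs : |eval (Fin.append x y) P| = 1 := by
      rw [hev, abs_mul, hPA2, hPB2, mul_one]
    have hint : ∫ z in {z : Fin (k + l) → ℝ | ∃ u ∈ A, ∃ w ∈ B, z = Fin.append u w},
        (eval z P) ^ 2 = a2⁻¹ * b2⁻¹ := by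
      rw [stmt17_setIntegral]
      have hptw : (fun p : (Fin k → ℝ) × (Fin l → ℝ) => (eval (Fin.append p.1 p.2) P) ^ 2)
          = fun p => (eval p.1 PA) ^ 2 * (eval p.2 PB) ^ 2 := by
        funext p; rw [hev]; ring
      rw [hptw,
        show (∫ p : (Fin k → ℝ) × (Fin l → ℝ), (eval p.1 PA) ^ 2 * (eval p.2 PB) ^ 2
            ∂(volume.restrict A).prod (volume.restrict B))
          = (∫ u in A, (eval u PA) ^ 2) * ∫ w in B, (eval w PB) ^ 2 from
          integral_prod_mul (fun u => (eval u PA) ^ 2) (fun w => (eval w PB) ^ 2),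
        hIA, hIB]
    have hmem := hAB.2 ⟨P, hdeg, habs, rfl⟩
    rw [hint] at hmem
    have hle : m⁻¹ ≤ a2⁻¹ * b2⁻¹ := stmt17_rpow_le hm (by positivity) hmem
    rw [← mul_inv] at hle
    have h2 := inv_anti₀ (by positivity) hle
    simpa using h2
  · -- m ≤ a * b
    obtain ⟨P, hdeg, habs, hval⟩ := hAB.1
    have hI : ∫ z in {z : Fin (k + l) → ℝ | ∃ u ∈ A, ∃ w ∈ B, z = Fin.append u w},
        (eval z P) ^ 2 = m⁻¹ :=
      stmt17_rpow_eq hm (integral_nonneg fun _ => sq_nonneg _) hval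
    have hSint := stmt17_setIntegral k l A B (fun z => (eval z P) ^ 2)
    have hFcont : Continuous fun p : (Fin k → ℝ) × (Fin l → ℝ) =>
        (eval (Fin.append p.1 p.2) P) ^ 2 :=
      ((MvPolynomial.continuous_eval P).comp stmt17_cont_append).pow 2
    have hFint : Integrable (fun p : (Fin k → ℝ) × (Fin l → ℝ) =>
        (eval (Fin.append p.1 p.2) P) ^ 2)
        ((volume.restrict A).prod (volume.restrict B)) :=
      stmt17_integrable_prod _ hFcont hAbd hBbd
    have hfub := integral_prod _ hFint
    have hinner : ∀ u : Fin k → ℝ,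
        b⁻¹ * (eval (Fin.append u y) P) ^ 2 ≤ ∫ w in B, (eval (Fin.append u w) P) ^ 2 := by
      intro u
      have := stmt17_key hb hB (stmt17_pevalL u P) ((stmt17_deg_pevalL u P).trans hdeg)
      simpa only [stmt17_eval_pevalL] using this
    have hmarg : Integrable (fun u => ∫ w in B, (eval (Fin.append u w) P) ^ 2)
        (volume.restrict A) := hFint.integral_prod_left
    have hgint : IntegrableOn (fun u => b⁻¹ * (eval (Fin.append u y) P) ^ 2) A := by
      refine stmt17_integrableOn _ ?_ hAbd
      have hpy : Continuous fun u : Fin k → ℝ => (u, y) :=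
        continuous_id.prodMk continuous_const
      have : Continuous fun u : Fin k → ℝ => eval (Fin.append u y) P :=
        (MvPolynomial.continuous_eval P).comp (stmt17_cont_append.comp hpy)
      exact continuous_const.mul (this.pow 2)
    have hstep : ∫ u in A, b⁻¹ * (eval (Fin.append u y) P) ^ 2
        ≤ ∫ u in A, ∫ w in B, (eval (Fin.append u w) P) ^ 2 :=
      integral_mono hgint hmarg fun u => hinner u
    have hone : (eval (Fin.append x y) P) ^ 2 = 1 := by
      rw [← sq_abs, habs, one_pow]
    have houter : a⁻¹ ≤ ∫ u in A, (eval (Fin.append u y) P) ^ 2 := by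
      have := stmt17_key ha hA (stmt17_pevalR y P) ((stmt17_deg_pevalR y P).trans hdeg)
      simp only [stmt17_eval_pevalR] at this
      rw [hone, mul_one] at this
      exact this
    have hchain : a⁻¹ * b⁻¹ ≤ m⁻¹ := by
      have h1 : ∫ u in A, b⁻¹ * (eval (Fin.append u y) P) ^ 2
          = b⁻¹ * ∫ u in A, (eval (Fin.append u y) P) ^ 2 := integral_const_mul _ _
      have h2 : b⁻¹ * a⁻¹ ≤ b⁻¹ * ∫ u in A, (eval (Fin.append u y) P) ^ 2 :=
        mul_le_mul_of_nonneg_left houter (by positivity)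
      have h3 : m⁻¹ = ∫ u in A, ∫ w in B, (eval (Fin.append u w) P) ^ 2 := by
        rw [← hI, hSint, hfub]
      rw [h3]
      calc a⁻¹ * b⁻¹ = b⁻¹ * a⁻¹ := by ring
        _ ≤ b⁻¹ * ∫ u in A, (eval (Fin.append u y) P) ^ 2 := h2
        _ = ∫ u in A, b⁻¹ * (eval (Fin.append u y) P) ^ 2 := h1.symm
        _ ≤ _ := hstep
    rw [← mul_inv] at hchain
    have h2 := inv_anti₀ (show (0:ℝ) < (a*b)⁻¹ by positivity) hchain
    simpa using h2
end
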